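/- arXiv:1411.7109 — 10 statements merged into one kernel-verified Lean document; each statement's English description precedes it below -/
import Mathlib

section
/- Let R be an integral domain with a non-Archimedean absolute value |·|, and let A_R[a,b] be the ring of formal Laurent series Σ_{n∈ℤ} c_n t^n with coefficients in R such that |c_n| r^n → 0 as |n| → ∞ for all r ∈ [a,b]. Then for each r ∈ [a,b] with r > 0, the map |h|_r = max_n |c_n| r^n defines a non-Archimedean multiplicative absolute value on A_R[a,b] extending |·| on R; in particular A_R[a,b] is an integral domain. -/
open Filter Topology

noncomputable section

/-- The coefficient condition defining the ring `A_R[a,b]` of Laurent series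
`∑_{n ∈ ℤ} c_n t^n` with `‖c_n‖ r^n → 0` as `|n| → ∞`, for every `r ∈ [a,b]`. -/
def LOK {R : Type*} [NormedCommRing R] (a b : ℝ) (c : ℤ → R) : Prop :=
  ∀ r ∈ Set.Icc a b, Tendsto (fun n : ℤ => ‖c n‖ * r ^ n) (cocompact ℤ) (𝓝 0)

/-- The Gauss norm `|h|_r = max_n ‖c_n‖ r^n`. -/
def gaussNorm {R : Type*} [NormedCommRing R] (r : ℝ) (c : ℤ → R) : ℝ :=
  ⨆ n : ℤ, ‖c n‖ * r ^ n

/-- Multiplication of Laurent series, on coefficients (a convergent series in the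
complete ring `R`). -/
def lmul {R : Type*} [NormedCommRing R] (c d : ℤ → R) : ℤ → R :=
  fun n => ∑' u : ℤ, c u * d (n - u)

private lemma exists_argmax_aux (f : ℤ → ℝ) (h0 : ∀ n, 0 ≤ f n)
    (h : Tendsto f cofinite (𝓝 0)) : ∃ n0, ∀ n, f n ≤ f n0 := by
  by_cases hz : ∀ n, f n = 0
  · exact ⟨0, fun n => by rw [hz n, hz 0]⟩
  push_neg at hz
  obtain ⟨m, hm⟩ := hz
  have hm' : 0 < f m := (h0 m).lt_of_ne (Ne.symm hm)
  have hev : {n : ℤ | ¬ f n < f m}.Finite :=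
    Filter.eventually_cofinite.mp (h.eventually_lt_const hm')
  have hmem : m ∈ hev.toFinset := hev.mem_toFinset.mpr (lt_irrefl _)
  obtain ⟨n0, hn0mem, hn0⟩ := hev.toFinset.exists_max_image f ⟨m, hmem⟩
  refine ⟨n0, fun n => ?_⟩
  by_cases hn : f n < f m
  · exact hn.le.trans (hn0 m hmem)
  · exact hn0 n (hev.mem_toFinset.mpr hn)

private lemma exists_argmax_top_aux (f : ℤ → ℝ) (h0 : ∀ n, 0 ≤ f n)
    (h : Tendsto f cofinite (𝓝 0)) (m : ℤ) (hm : 0 < f m) :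
    ∃ n0, (∀ n, f n ≤ f n0) ∧ ∀ n, n0 < n → f n < f n0 := by
  obtain ⟨n1, hn1⟩ := exists_argmax_aux f h0 h
  have hpos : 0 < f n1 := hm.trans_le (hn1 m)
  have hev : {n : ℤ | ¬ f n < f n1}.Finite :=
    Filter.eventually_cofinite.mp (h.eventually_lt_const hpos)
  have hmem : n1 ∈ hev.toFinset := hev.mem_toFinset.mpr (lt_irrefl _)
  have hne : hev.toFinset.Nonempty := ⟨n1, hmem⟩
  set n0 := hev.toFinset.max' hne with hn0def
  have hn0mem : n0 ∈ hev.toFinset := hev.toFinset.max'_mem hne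
  have h1 : f n1 ≤ f n0 := not_lt.mp (hev.mem_toFinset.mp hn0mem)
  refine ⟨n0, fun n => (hn1 n).trans h1, fun n hn => ?_⟩
  have hnot : n ∉ hev.toFinset := fun hmem' =>
    absurd (hev.toFinset.le_max' n hmem') (not_le.mpr hn)
  have hlt : f n < f n1 := by
    by_contra hc
    exact hnot (hev.mem_toFinset.mpr hc)
  exact hlt.trans_le h1


/-- For an integral domain `R` complete with respect to a non-Archimedean absolute value,
and `0 ≤ a < b`, `r ∈ [a,b]` with `r > 0`, the Gauss norm `|·|_r` on `A_R[a,b]` vanishes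
only at `0`, is multiplicative, satisfies the strong triangle inequality, and extends the
absolute value of `R`; in particular `A_R[a,b]` is an integral domain. -/
theorem gaussNorm_absolute_value {R : Type*} [NormedCommRing R] [IsDomain R] [CompleteSpace R]
    (hna : IsNonarchimedean (norm : R → ℝ))
    (hmul : ∀ x y : R, ‖x * y‖ = ‖x‖ * ‖y‖)
    (a b : ℝ) (ha : 0 ≤ a) (hab : a < b)
    (r : ℝ) (hr : r ∈ Set.Icc a b) (hr0 : 0 < r) :
    (∀ c : ℤ → R, LOK a b c → (gaussNorm r c = 0 ↔ c = 0)) ∧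
    (∀ c d : ℤ → R, LOK a b c → LOK a b d →
      gaussNorm r (lmul c d) = gaussNorm r c * gaussNorm r d) ∧
    (∀ c d : ℤ → R, LOK a b c → LOK a b d →
      gaussNorm r (c + d) ≤ max (gaussNorm r c) (gaussNorm r d)) ∧
    (∀ x : R, gaussNorm r (fun n => if n = 0 then x else 0) = ‖x‖) ∧
    (∀ c d : ℤ → R, LOK a b c → LOK a b d → c ≠ 0 → d ≠ 0 → lmul c d ≠ 0) := by
  haveI : IsUltrametricDist R := IsUltrametricDist.isUltrametricDist_of_isNonarchimedean_norm hna
  have hrne : r ≠ 0 := ne_of_gt hr0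
  have hrp : ∀ n : ℤ, (0:ℝ) < r ^ n := fun n => zpow_pos hr0 n
  have hcancel : ∀ (x : ℝ) (n : ℤ), x * r ^ n * r ^ (-n) = x := fun x n => by
    rw [mul_assoc, ← zpow_add₀ hrne, add_neg_cancel, zpow_zero, mul_one]
  have hT : ∀ c : ℤ → R, LOK a b c →
      Tendsto (fun n : ℤ => ‖c n‖ * r ^ n) cofinite (𝓝 0) := by
    intro c hc
    have := hc r hr
    rwa [cocompact_eq_cofinite] at this
  have h0 : ∀ (c : ℤ → R) (n : ℤ), 0 ≤ ‖c n‖ * r ^ n :=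
    fun c n => mul_nonneg (norm_nonneg _) (hrp n).le
  have hargmax : ∀ c : ℤ → R, LOK a b c → ∃ n0, ∀ n, ‖c n‖ * r ^ n ≤ ‖c n0‖ * r ^ n0 :=
    fun c hc => exists_argmax_aux _ (h0 c) (hT c hc)
  have hbdd : ∀ c : ℤ → R, LOK a b c →
      BddAbove (Set.range fun n : ℤ => ‖c n‖ * r ^ n) := by
    intro c hc
    obtain ⟨n0, hn0⟩ := hargmax c hc
    exact ⟨‖c n0‖ * r ^ n0, by rintro x ⟨n, rfl⟩; exact hn0 n⟩
  have hle : ∀ (c : ℤ → R), LOK a b c → ∀ n : ℤ, ‖c n‖ * r ^ n ≤ gaussNorm r c :=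
    fun c hc n => le_ciSup (hbdd c hc) n
  have hgn : ∀ c : ℤ → R, LOK a b c → 0 ≤ gaussNorm r c :=
    fun c hc => (h0 c 0).trans (hle c hc 0)
  have hg0 : gaussNorm r (0 : ℤ → R) = 0 := by
    simp only [gaussNorm, Pi.zero_apply, norm_zero, zero_mul, ciSup_const]
  have part1 : ∀ c : ℤ → R, LOK a b c → (gaussNorm r c = 0 ↔ c = 0) := by
    intro c hc
    constructor
    · intro h
      funext n
      have h1 : ‖c n‖ * r ^ n ≤ 0 := h ▸ hle c hc n
      have h2 : ‖c n‖ * r ^ n = 0 := le_antisymm h1 (h0 c n)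
      have h3 : ‖c n‖ = 0 := by
        rcases mul_eq_zero.mp h2 with h' | h'
        · exact h'
        · exact absurd h' (hrp n).ne'
      simpa using h3
    · rintro rfl; exact hg0
  have hgpos : ∀ c : ℤ → R, LOK a b c → c ≠ 0 → 0 < gaussNorm r c := fun c hc hc0 =>
    (hgn c hc).lt_of_ne (Ne.symm fun h => hc0 ((part1 c hc).mp h))
  have hdivle : ∀ (x B : ℝ) (n : ℤ), x * r ^ n ≤ B → x ≤ B * r ^ (-n) := by
    intro x B n h
    have := mul_le_mul_of_nonneg_right h (hrp (-n)).le
    rwa [hcancel] at this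
  have hdivlt : ∀ (x B : ℝ) (n : ℤ), x * r ^ n < B → x < B * r ^ (-n) := by
    intro x B n h
    have := mul_lt_mul_of_pos_right h (hrp (-n))
    rwa [hcancel] at this
  have hcoeff : ∀ (c : ℤ → R), LOK a b c → ∀ m : ℤ, ‖c m‖ ≤ gaussNorm r c * r ^ (-m) :=
    fun c hc m => hdivle _ _ _ (hle c hc m)
  have hsumm : ∀ (c d : ℤ → R), LOK a b c → LOK a b d → ∀ n : ℤ,
      Summable (fun u : ℤ => c u * d (n - u)) := by
    intro c d hc hd n
    apply NonarchimedeanAddGroup.summable_of_tendsto_cofinite_zero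
    rw [tendsto_zero_iff_norm_tendsto_zero]
    apply squeeze_zero (g := fun u : ℤ => (‖c u‖ * r ^ u) * (gaussNorm r d * r ^ (-n)))
      (fun u => norm_nonneg _)
    · intro u
      calc ‖c u * d (n - u)‖ = ‖c u‖ * ‖d (n - u)‖ := hmul _ _
        _ ≤ ‖c u‖ * (gaussNorm r d * r ^ (-(n - u))) :=
            mul_le_mul_of_nonneg_left (hcoeff d hd (n - u)) (norm_nonneg _)
        _ = ‖c u‖ * gaussNorm r d * r ^ (u - n) := by rw [neg_sub, ← mul_assoc]
        _ = (‖c u‖ * r ^ u) * (gaussNorm r d * r ^ (-n)) := by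
            rw [mul_mul_mul_comm, ← zpow_add₀ hrne, ← sub_eq_add_neg]
    · have := (hT c hc).mul_const (gaussNorm r d * r ^ (-n))
      simpa using this
  have hub : ∀ (c d : ℤ → R), LOK a b c → LOK a b d → ∀ n : ℤ,
      ‖lmul c d n‖ * r ^ n ≤ gaussNorm r c * gaussNorm r d := by
    intro c d hc hd n
    have hnn : 0 ≤ gaussNorm r c * gaussNorm r d * r ^ (-n) :=
      mul_nonneg (mul_nonneg (hgn c hc) (hgn d hd)) (hrp _).le
    have h1 : ‖lmul c d n‖ ≤ gaussNorm r c * gaussNorm r d * r ^ (-n) := by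
      apply IsUltrametricDist.norm_tsum_le_of_forall_le_of_nonneg hnn
      intro u
      apply hdivle
      calc ‖c u * d (n - u)‖ * r ^ n
          = (‖c u‖ * r ^ u) * (‖d (n - u)‖ * r ^ (n - u)) := by
            rw [hmul, mul_mul_mul_comm, ← zpow_add₀ hrne]
            have hx : u + (n - u) = n := by omega
            rw [hx]
        _ ≤ gaussNorm r c * gaussNorm r d :=
            mul_le_mul (hle c hc u) (hle d hd (n - u)) (h0 d _) (hgn c hc)
    have := mul_le_mul_of_nonneg_right h1 (hrp n).le
    calc ‖lmul c d n‖ * r ^ n ≤ gaussNorm r c * gaussNorm r d * r ^ (-n) * r ^ n := this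
      _ = gaussNorm r c * gaussNorm r d := by
          rw [mul_assoc, ← zpow_add₀ hrne, neg_add_cancel, zpow_zero, mul_one]
  have key : ∀ (c d : ℤ → R), LOK a b c → LOK a b d → c ≠ 0 → d ≠ 0 →
      ∃ n : ℤ, ‖lmul c d n‖ * r ^ n = gaussNorm r c * gaussNorm r d := by
    intro c d hc hd hc0 hd0
    obtain ⟨mc, hmc⟩ := Function.ne_iff.mp hc0
    obtain ⟨md, hmd⟩ := Function.ne_iff.mp hd0
    obtain ⟨i, hiall, hitop⟩ := exists_argmax_top_aux _ (h0 c) (hT c hc) mc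
      (mul_pos (norm_pos_iff.mpr hmc) (hrp mc))
    obtain ⟨j, hjall, hjtop⟩ := exists_argmax_top_aux _ (h0 d) (hT d hd) md
      (mul_pos (norm_pos_iff.mpr hmd) (hrp md))
    have hNc : gaussNorm r c = ‖c i‖ * r ^ i := le_antisymm (ciSup_le hiall) (hle c hc i)
    have hNd : gaussNorm r d = ‖d j‖ * r ^ j := le_antisymm (ciSup_le hjall) (hle d hd j)
    have hstrict : ∀ u : ℤ, u ≠ i →
        ‖c u * d ((i + j) - u)‖ < gaussNorm r c * gaussNorm r d * r ^ (-(i + j)) := by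
      intro u hu
      apply hdivlt
      rcases lt_or_gt_of_ne hu with hlt | hgt
      · have h1 : ‖d ((i + j) - u)‖ * r ^ ((i + j) - u) < ‖d j‖ * r ^ j := hjtop _ (by omega)
        calc ‖c u * d ((i + j) - u)‖ * r ^ (i + j)
            = (‖c u‖ * r ^ u) * (‖d ((i + j) - u)‖ * r ^ ((i + j) - u)) := by
              rw [hmul, mul_mul_mul_comm, ← zpow_add₀ hrne]
              have hx : u + ((i + j) - u) = i + j := by omega
              rw [hx]
          _ ≤ gaussNorm r c * (‖d ((i + j) - u)‖ * r ^ ((i + j) - u)) :=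
              mul_le_mul_of_nonneg_right (hle c hc u) (h0 d _)
          _ < gaussNorm r c * gaussNorm r d :=
              mul_lt_mul_of_pos_left (h1.trans_le (hle d hd j)) (hgpos c hc hc0)
      · have h1 : ‖c u‖ * r ^ u < ‖c i‖ * r ^ i := hitop _ hgt
        calc ‖c u * d ((i + j) - u)‖ * r ^ (i + j)
            = (‖c u‖ * r ^ u) * (‖d ((i + j) - u)‖ * r ^ ((i + j) - u)) := by
              rw [hmul, mul_mul_mul_comm, ← zpow_add₀ hrne]
              have hx : u + ((i + j) - u) = i + j := by omega
              rw [hx]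
          _ ≤ (‖c u‖ * r ^ u) * gaussNorm r d :=
              mul_le_mul_of_nonneg_left (hle d hd _) (h0 c u)
          _ < gaussNorm r c * gaussNorm r d :=
              mul_lt_mul_of_pos_right (h1.trans_le (hle c hc i)) (hgpos d hd hd0)
    have hbig : ‖c i * d j‖ = gaussNorm r c * gaussNorm r d * r ^ (-(i + j)) := by
      rw [hmul, hNc, hNd, mul_mul_mul_comm, ← zpow_add₀ hrne, hcancel]
    have hsum := hsumm c d hc hd (i + j)
    have hsplit := Summable.tsum_eq_add_tsum_ite hsum i
    have hji : (i + j) - i = j := by omega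
    have htend0 : Tendsto (fun u : ℤ => ‖c u * d ((i + j) - u)‖) cofinite (𝓝 0) :=
      tendsto_zero_iff_norm_tendsto_zero.mp hsum.tendsto_cofinite_zero
    have hgt : Tendsto (fun u : ℤ => ‖if u = i then (0:R) else c u * d ((i + j) - u)‖)
        cofinite (𝓝 0) := by
      apply squeeze_zero (fun u => norm_nonneg _) _ htend0
      intro u; by_cases h : u = i <;> simp [h]
    obtain ⟨u1, hu1⟩ := exists_argmax_aux _ (fun u => norm_nonneg _) hgt
    have hsmall : ‖∑' u : ℤ, (if u = i then (0:R) else c u * d ((i + j) - u))‖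
        < gaussNorm r c * gaussNorm r d * r ^ (-(i + j)) := by
      have hb : ‖if u1 = i then (0:R) else c u1 * d ((i + j) - u1)‖
          < gaussNorm r c * gaussNorm r d * r ^ (-(i + j)) := by
        by_cases h : u1 = i
        · rw [if_pos h, norm_zero]
          exact mul_pos (mul_pos (hgpos c hc hc0) (hgpos d hd hd0)) (hrp _)
        · simpa [h] using hstrict u1 h
      exact lt_of_le_of_lt
        (IsUltrametricDist.norm_tsum_le_of_forall_le_of_nonneg (norm_nonneg _) hu1) hb
    have hnorm : ‖lmul c d (i + j)‖ = gaussNorm r c * gaussNorm r d * r ^ (-(i + j)) := by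
      have hdef : lmul c d (i + j) = ∑' u : ℤ, c u * d ((i + j) - u) := rfl
      rw [hdef, hsplit, hji]
      have hne : ‖c i * d j‖ ≠ ‖∑' u : ℤ, (if u = i then (0:R) else c u * d ((i + j) - u))‖ := by
        rw [hbig]; exact hsmall.ne'
      rw [IsUltrametricDist.norm_add_eq_max_of_norm_ne_norm hne, hbig]
      exact max_eq_left hsmall.le
    refine ⟨i + j, ?_⟩
    rw [hnorm, mul_assoc, ← zpow_add₀ hrne, neg_add_cancel, zpow_zero, mul_one]
  have hlmul0 : ∀ d : ℤ → R, lmul (0 : ℤ → R) d = 0 := by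
    intro d; funext n; simp [lmul]
  have hlmul0' : ∀ c : ℤ → R, lmul c (0 : ℤ → R) = 0 := by
    intro c; funext n; simp [lmul]
  refine ⟨part1, ?_, ?_, ?_, ?_⟩
  · intro c d hc hd
    by_cases hc0 : c = 0
    · subst hc0; rw [hlmul0, hg0, zero_mul]
    by_cases hd0 : d = 0
    · subst hd0; rw [hlmul0', hg0, mul_zero]
    obtain ⟨n, hn⟩ := key c d hc hd hc0 hd0
    refine le_antisymm (ciSup_le (hub c d hc hd)) ?_
    have hbddp : BddAbove (Set.range fun m : ℤ => ‖lmul c d m‖ * r ^ m) :=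
      ⟨gaussNorm r c * gaussNorm r d, by rintro x ⟨m, rfl⟩; exact hub c d hc hd m⟩
    rw [← hn]
    exact le_ciSup hbddp n
  · intro c d hc hd
    show (⨆ n : ℤ, ‖(c + d) n‖ * r ^ n) ≤ _
    apply ciSup_le
    intro n
    have h1 : ‖(c + d) n‖ ≤ max ‖c n‖ ‖d n‖ := by
      simpa using hna (c n) (d n)
    calc ‖(c + d) n‖ * r ^ n ≤ max ‖c n‖ ‖d n‖ * r ^ n :=
          mul_le_mul_of_nonneg_right h1 (hrp n).le
      _ = max (‖c n‖ * r ^ n) (‖d n‖ * r ^ n) := max_mul_of_nonneg _ _ (hrp n).le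
      _ ≤ max (gaussNorm r c) (gaussNorm r d) := max_le_max (hle c hc n) (hle d hd n)
  · intro x
    have hb : BddAbove (Set.range fun n : ℤ => ‖if n = 0 then x else 0‖ * r ^ n) := by
      refine ⟨‖x‖, ?_⟩
      rintro y ⟨n, rfl⟩
      by_cases h : n = 0 <;> simp [h]
    refine le_antisymm (ciSup_le fun n => ?_) ?_
    · by_cases h : n = 0 <;> simp [h]
    · have := le_ciSup hb 0
      simpa [gaussNorm] using this
  · intro c d hc hd hc0 hd0 hcontra
    obtain ⟨n, hn⟩ := key c d hc hd hc0 hd0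
    rw [hcontra] at hn
    simp only [Pi.zero_apply, norm_zero, zero_mul] at hn
    exact absurd hn.symm (ne_of_gt (mul_pos (hgpos c hc hc0) (hgpos d hd hd0)))
end
end

section
/- For nonzero elements h, g of the ring A_R[a,b], the Newton polygon π_h(x) := log|h|_{exp(x)} = max_{n∈ℤ}(n·x + log|c_n|) satisfies π_{hg}(x) = π_h(x) + π_g(x) for all x in (log a, log b]. -/
open Filter Topology

noncomputable section

/-- The Newton polygon `π_h(x) = log |h|_{exp x}`. -/
def newton {R : Type*} [NormedCommRing R] (c : ℤ → R) (x : ℝ) : ℝ :=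
  Real.log (gaussNorm (Real.exp x) c)

/-- A nonnegative function on `ℤ` tending to zero along `cofinite` attains its sup. -/
lemma exists_forall_le_of_tendsto_cofinite {f : ℤ → ℝ} (h0 : ∀ u, 0 ≤ f u)
    (hf : Tendsto f cofinite (𝓝 0)) : ∃ i, ∀ u, f u ≤ f i := by
  by_cases hz : ∀ u, f u = 0
  · exact ⟨0, fun u => by rw [hz u, hz 0]⟩
  push_neg at hz
  obtain ⟨n0, hn0⟩ := hz
  have hpos : 0 < f n0 := (h0 n0).lt_of_ne (Ne.symm hn0)
  have hfin : {u | f n0 ≤ f u}.Finite := by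
    have := hf (Iio_mem_nhds hpos)
    simp only [mem_map, mem_cofinite] at this
    refine this.subset fun u hu => ?_
    simp only [Set.mem_compl_iff, Set.mem_preimage, Set.mem_Iio, not_lt]
    exact hu
  obtain ⟨i, hiS, hi⟩ := Finset.exists_max_image hfin.toFinset f
    ⟨n0, by simp [Set.Finite.mem_toFinset]⟩
  refine ⟨i, fun u => ?_⟩
  by_cases hu : f n0 ≤ f u
  · exact hi u (by simpa [Set.Finite.mem_toFinset] using hu)
  · exact (not_le.mp hu).le.trans (hi n0 (by simp [Set.Finite.mem_toFinset]))

/-- A nonnegative function on `ℤ`, not identically zero, tending to zero along `cofinite`,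
has a *largest* index attaining its (positive) maximum. -/
lemma exists_strictMax_of_tendsto_cofinite {f : ℤ → ℝ} (h0 : ∀ u, 0 ≤ f u)
    (hf : Tendsto f cofinite (𝓝 0)) {n0 : ℤ} (hn0 : f n0 ≠ 0) :
    ∃ i, (∀ u, f u ≤ f i) ∧ 0 < f i ∧ ∀ u, i < u → f u < f i := by
  obtain ⟨i0, hi0⟩ := exists_forall_le_of_tendsto_cofinite h0 hf
  have hpos : 0 < f i0 := lt_of_lt_of_le ((h0 n0).lt_of_ne (Ne.symm hn0)) (hi0 n0)
  have hfin : {u | f u = f i0}.Finite := by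
    have := hf (Iio_mem_nhds hpos)
    simp only [mem_map, mem_cofinite] at this
    refine this.subset fun u hu => ?_
    simp only [Set.mem_compl_iff, Set.mem_preimage, Set.mem_Iio, not_lt]
    exact hu.symm.le
  have hne : hfin.toFinset.Nonempty := ⟨i0, by simp [Set.Finite.mem_toFinset]⟩
  refine ⟨hfin.toFinset.max' hne, ?_, ?_, ?_⟩
  · have : f (hfin.toFinset.max' hne) = f i0 := by
      have := hfin.toFinset.max'_mem hne
      simpa [Set.Finite.mem_toFinset] using this
    rw [this]; exact hi0
  · have : f (hfin.toFinset.max' hne) = f i0 := by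
      have := hfin.toFinset.max'_mem hne
      simpa [Set.Finite.mem_toFinset] using this
    rw [this]; exact hpos
  · intro u hu
    have hmax : f (hfin.toFinset.max' hne) = f i0 := by
      have := hfin.toFinset.max'_mem hne
      simpa [Set.Finite.mem_toFinset] using this
    rw [hmax]
    refine (hi0 u).lt_of_ne fun hEq => ?_
    have : u ∈ hfin.toFinset := by simpa [Set.Finite.mem_toFinset] using hEq
    exact absurd (Finset.le_max' _ _ this) (not_le.mpr hu)

/-- Multiplicativity of the Gauss norm at a fixed radius `r > 0`. -/
lemma gaussNorm_lmul {R : Type*} [NormedCommRing R] [CompleteSpace R]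
    (hna : IsNonarchimedean (norm : R → ℝ))
    (hmul : ∀ x y : R, ‖x * y‖ = ‖x‖ * ‖y‖)
    {r : ℝ} (hr : 0 < r) (h g : ℤ → R)
    (hh : Tendsto (fun n : ℤ => ‖h n‖ * r ^ n) cofinite (𝓝 0))
    (hg : Tendsto (fun n : ℤ => ‖g n‖ * r ^ n) cofinite (𝓝 0))
    (hh0 : h ≠ 0) (hg0 : g ≠ 0) :
    gaussNorm r (lmul h g) = gaussNorm r h * gaussNorm r g ∧
      0 < gaussNorm r h ∧ 0 < gaussNorm r g := by
  letI : IsUltrametricDist R :=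
    IsUltrametricDist.isUltrametricDist_of_isNonarchimedean_norm hna
  set fh : ℤ → ℝ := fun u => ‖h u‖ * r ^ u with hfh
  set fg : ℤ → ℝ := fun u => ‖g u‖ * r ^ u with hfg
  have fh0 : ∀ u, 0 ≤ fh u := fun u => mul_nonneg (norm_nonneg _) (zpow_nonneg hr.le _)
  have fg0 : ∀ u, 0 ≤ fg u := fun u => mul_nonneg (norm_nonneg _) (zpow_nonneg hr.le _)
  obtain ⟨nh, hnh⟩ := Function.ne_iff.mp hh0
  obtain ⟨ng, hng⟩ := Function.ne_iff.mp hg0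
  have hfhnh : fh nh ≠ 0 :=
    (mul_pos (norm_pos_iff.mpr hnh) (zpow_pos hr _)).ne'
  have hfgng : fg ng ≠ 0 :=
    (mul_pos (norm_pos_iff.mpr hng) (zpow_pos hr _)).ne'
  obtain ⟨i, hile, hipos, histrict⟩ := exists_strictMax_of_tendsto_cofinite fh0 hh hfhnh
  obtain ⟨j, hjle, hjpos, hjstrict⟩ := exists_strictMax_of_tendsto_cofinite fg0 hg hfgng
  set H : ℝ := fh i with hH
  set G : ℝ := fg j with hG
  have hBh : BddAbove (Set.range fh) := ⟨H, by rintro _ ⟨u, rfl⟩; exact hile u⟩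
  have hBg : BddAbove (Set.range fg) := ⟨G, by rintro _ ⟨u, rfl⟩; exact hjle u⟩
  have hGh : gaussNorm r h = H := le_antisymm (ciSup_le hile) (le_ciSup hBh i)
  have hGg : gaussNorm r g = G := le_antisymm (ciSup_le hjle) (le_ciSup hBg j)
  -- the basic norm identity for product coefficients
  have eq1 : ∀ n u : ℤ, ‖h u * g (n - u)‖ * r ^ n = fh u * fg (n - u) := by
    intro n u
    have : (r : ℝ) ^ n = r ^ u * r ^ (n - u) := by
      rw [← zpow_add₀ hr.ne', add_sub_cancel]
    rw [hmul, this]; simp only [hfh, hfg]; ring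
  have eq2 : ∀ n u : ℤ, ‖h u * g (n - u)‖ = fh u * fg (n - u) / r ^ n := by
    intro n u
    rw [eq_div_iff (zpow_ne_zero _ hr.ne')]
    exact eq1 n u
  -- each family of terms tends to zero
  have keyT : ∀ n : ℤ, Tendsto (fun u => fh u * fg (n - u)) cofinite (𝓝 0) := by
    intro n
    refine squeeze_zero (fun u => mul_nonneg (fh0 u) (fg0 _))
      (fun u => mul_le_mul_of_nonneg_left (hjle _) (fh0 u)) ?_
    simpa using hh.mul_const G
  have keyS : ∀ n : ℤ, Summable (fun u => h u * g (n - u)) := by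
    intro n
    refine NonarchimedeanAddGroup.summable_of_tendsto_cofinite_zero ?_
    rw [tendsto_zero_iff_norm_tendsto_zero]
    have : Tendsto (fun u => fh u * fg (n - u) / r ^ n) cofinite (𝓝 0) := by
      simpa using (keyT n).div_const (r ^ n)
    refine this.congr fun u => (eq2 n u).symm
  -- upper bound
  have hub : ∀ n : ℤ, ‖lmul h g n‖ * r ^ n ≤ H * G := by
    intro n
    rw [← le_div_iff₀ (zpow_pos hr n)]
    refine IsUltrametricDist.norm_tsum_le_of_forall_le fun u => ?_
    rw [eq2 n u, div_le_div_iff_of_pos_right (zpow_pos hr n)]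
    exact mul_le_mul (hile u) (hjle _) (fg0 _) hipos.le
  -- the key coefficient n = i + j
  have hkey : ‖lmul h g (i + j)‖ * r ^ (i + j) = H * G := by
    have hsum := keyS (i + j)
    have hsplit := Summable.tsum_eq_add_tsum_ite hsum i
    have hFi : h i * g (i + j - i) = h i * g j := by rw [add_sub_cancel_left]
    have hnFi : ‖h i * g (i + j - i)‖ = H * G / r ^ (i + j) := by
      rw [eq2]
      congr 2
      rw [add_sub_cancel_left]
    have hHGpos : 0 < H * G / r ^ (i + j) :=
      div_pos (mul_pos hipos hjpos) (zpow_pos hr _)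
    -- bound on the remaining terms
    have hother : ∀ u : ℤ,
        ‖if u = i then (0 : R) else h u * g (i + j - u)‖ < H * G / r ^ (i + j) := by
      intro u
      by_cases hu : u = i
      · simpa [hu] using hHGpos
      · simp only [if_neg hu]
        rw [eq2, div_lt_div_iff_of_pos_right (zpow_pos hr _)]
        rcases lt_or_gt_of_ne hu with hlt | hgt
        · -- u < i : then i + j - u > j, so the g-factor is strictly smaller
          have : fg (i + j - u) < G := hjstrict _ (by omega)
          calc fh u * fg (i + j - u) ≤ H * fg (i + j - u) :=
                mul_le_mul_of_nonneg_right (hile u) (fg0 _)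
            _ < H * G := by exact mul_lt_mul_of_pos_left this hipos
        · -- u > i : the h-factor is strictly smaller
          have : fh u < H := histrict _ hgt
          calc fh u * fg (i + j - u) ≤ fh u * G :=
                mul_le_mul_of_nonneg_left (hjle _) (fh0 u)
            _ < H * G := mul_lt_mul_of_pos_right this hjpos
    -- the tail has a maximal term, hence norm strictly less than H*G/r^(i+j)
    have htailtend : Tendsto
        (fun u : ℤ => ‖if u = i then (0 : R) else h u * g (i + j - u)‖) cofinite (𝓝 0) := by
      refine squeeze_zero (fun u => norm_nonneg _) (fun u => ?_)
        (by simpa using (keyT (i + j)).div_const (r ^ (i + j)))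
      by_cases hu : u = i
      · simp only [if_pos hu, norm_zero]
        exact div_nonneg (mul_nonneg (fh0 u) (fg0 _)) (zpow_nonneg hr.le _)
      · simp only [if_neg hu]
        exact (eq2 (i + j) u).le
    obtain ⟨u0, hu0⟩ := exists_forall_le_of_tendsto_cofinite (fun u => norm_nonneg _) htailtend
    have htail : ‖∑' u : ℤ, if u = i then (0 : R) else h u * g (i + j - u)‖
        < H * G / r ^ (i + j) :=
      lt_of_le_of_lt (IsUltrametricDist.norm_tsum_le_of_forall_le hu0) (hother u0)
    have hlm : lmul h g (i + j) = h i * g (i + j - i) +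
        ∑' u : ℤ, if u = i then (0 : R) else h u * g (i + j - u) := hsplit
    have hnorm : ‖lmul h g (i + j)‖ = H * G / r ^ (i + j) := by
      rw [hlm, IsUltrametricDist.norm_add_eq_max_of_norm_ne_norm
        (by rw [hnFi]; exact htail.ne'), hnFi, max_eq_left htail.le]
    rw [hnorm, div_mul_cancel₀ _ (zpow_ne_zero _ hr.ne')]
  refine ⟨?_, hGh ▸ hipos, hGg ▸ hjpos⟩
  have hBm : BddAbove (Set.range fun n : ℤ => ‖lmul h g n‖ * r ^ n) :=
    ⟨H * G, by rintro _ ⟨n, rfl⟩; exact hub n⟩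
  rw [hGh, hGg]
  refine le_antisymm (ciSup_le hub) ?_
  rw [← hkey]
  exact le_ciSup hBm (i + j)

/-- For nonzero `h, g ∈ A_R[a,b]`, the Newton polygon is additive:
`π_{hg}(x) = π_h(x) + π_g(x)` for all `x ∈ (log a, log b]`
(equivalently, `exp x ∈ (a, b]`). -/
theorem newton_mul {R : Type*} [NormedCommRing R] [IsDomain R] [CompleteSpace R]
    (hna : IsNonarchimedean (norm : R → ℝ))
    (hmul : ∀ x y : R, ‖x * y‖ = ‖x‖ * ‖y‖)
    (a b : ℝ) (ha : 0 ≤ a) (hab : a < b)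
    (h g : ℤ → R) (hh : LOK a b h) (hg : LOK a b g)
    (hh0 : h ≠ 0) (hg0 : g ≠ 0) :
    ∀ x : ℝ, Real.exp x ∈ Set.Ioc a b →
      newton (lmul h g) x = newton h x + newton g x := by
  intro x hx
  set r : ℝ := Real.exp x with hrdef
  have hr : 0 < r := Real.exp_pos x
  have hrI : r ∈ Set.Icc a b := ⟨hx.1.le, hx.2⟩
  have hh' : Tendsto (fun n : ℤ => ‖h n‖ * r ^ n) cofinite (𝓝 0) :=
    (cocompact_eq_cofinite ℤ) ▸ hh r hrI
  have hg' : Tendsto (fun n : ℤ => ‖g n‖ * r ^ n) cofinite (𝓝 0) :=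
    (cocompact_eq_cofinite ℤ) ▸ hg r hrI
  obtain ⟨heq, hHpos, hGpos⟩ := gaussNorm_lmul hna hmul hr h g hh' hg' hh0 hg0
  unfold newton
  rw [heq, Real.log_mul hHpos.ne' hGpos.ne']
end
end

section
/- Let R be an integral domain complete with respect to a non-Archimedean absolute value. The group of units of the ring A_R(𝔸¹) of entire power series equals the group of units of R, i.e., A_R(𝔸¹)^× = R^×. -/
open Filter Topology

noncomputable section

/-- The predicate describing the ring `A_R(𝔸¹)` of entire power series over `R`:
`‖c_n‖ r^n → 0` as `n → ∞`, for every `r > 0`. -/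
def EntireOK {R : Type*} [NormedCommRing R] (f : PowerSeries R) : Prop :=
  ∀ r : ℝ, 0 < r →
    Tendsto (fun n : ℕ => ‖PowerSeries.coeff n f‖ * r ^ n) atTop (𝓝 0)

/-- A real sequence tending to 0 which is positive somewhere attains its
maximum at a minimal index. -/
lemma exists_minmax (u : ℕ → ℝ) (ht : Tendsto u atTop (𝓝 0)) {n₀ : ℕ} (h : 0 < u n₀) :
    ∃ m, (∀ n, u n ≤ u m) ∧ ∀ k < m, u k < u m := by
  classical
  have hev : ∀ᶠ n in atTop, u n < u n₀ := ht.eventually (gt_mem_nhds h)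
  obtain ⟨N, hN⟩ := eventually_atTop.mp hev
  obtain ⟨b, hb, hmax⟩ := (Finset.range (max N (n₀ + 1))).exists_max_image u
    ⟨n₀, Finset.mem_range.mpr (by omega)⟩
  have hP : ∃ m, ∀ n, u n ≤ u m := by
    refine ⟨b, fun n => ?_⟩
    by_cases hn : n < max N (n₀ + 1)
    · exact hmax n (Finset.mem_range.mpr hn)
    · have h1 : u n < u n₀ := hN n (by omega)
      have h2 : u n₀ ≤ u b := hmax n₀ (Finset.mem_range.mpr (by omega))
      linarith
  refine ⟨Nat.find hP, Nat.find_spec hP, fun k hk => ?_⟩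
  have hnk := Nat.find_min hP hk
  push_neg at hnk
  obtain ⟨n, hn⟩ := hnk
  exact lt_of_lt_of_le hn (Nat.find_spec hP n)

/-- Non-archimedean strict bound on finite sums. -/
lemma norm_sum_lt_of_nonarch {R : Type*} [NormedCommRing R]
    (hna : IsNonarchimedean (norm : R → ℝ)) {α : Type*} {c : ℝ} (hc : 0 < c)
    (s : Finset α) (f : α → R) (h : ∀ x ∈ s, ‖f x‖ < c) : ‖∑ x ∈ s, f x‖ < c := by
  classical
  induction s using Finset.induction with
  | empty => simpa using hc
  | @insert a s' hx ih =>
    rw [Finset.sum_insert hx]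
    calc ‖f a + ∑ x ∈ s', f x‖ ≤ max ‖f a‖ ‖∑ x ∈ s', f x‖ := hna _ _
    _ < c := max_lt (h a (Finset.mem_insert_self a s'))
        (ih fun x hxs => h x (Finset.mem_insert_of_mem hxs))

/-- For an integral domain `R` complete with respect to a non-Archimedean absolute value,
the group of units of the ring `A_R(𝔸¹)` of entire power series equals `R^×`:
any unit of `A_R(𝔸¹)` is a constant series given by a unit of `R`, and conversely
every unit of `R` is a unit of `A_R(𝔸¹)`. -/
theorem units_of_entire_eq_units {R : Type*} [NormedCommRing R] [IsDomain R] [CompleteSpace R]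
    (hna : IsNonarchimedean (norm : R → ℝ))
    (hmul : ∀ x y : R, ‖x * y‖ = ‖x‖ * ‖y‖) :
    (∀ f g : PowerSeries R, EntireOK f → EntireOK g → f * g = 1 →
      ∃ c : R, IsUnit c ∧ f = PowerSeries.C c) ∧
    (∀ c : R, IsUnit c →
      ∃ g : PowerSeries R, EntireOK g ∧ (PowerSeries.C c) * g = 1) := by
  constructor
  · intro f g hf hg hfg
    -- Step 1: all positive-index coefficients of f vanish.
    have hvanish : ∀ n₀ : ℕ, 0 < n₀ → PowerSeries.coeff n₀ f = 0 := by
      intro n₀ hn₀pos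
      by_contra hne
      have hfn₀ : (0:ℝ) < ‖PowerSeries.coeff n₀ f‖ := norm_pos_iff.mpr hne
      -- choose a large radius r
      set r : ℝ := max 1 ((‖PowerSeries.coeff 0 f‖ + 1) / ‖PowerSeries.coeff n₀ f‖) with hr
      have hr1 : (1:ℝ) ≤ r := le_max_left _ _
      have hrpos : (0:ℝ) < r := lt_of_lt_of_le one_pos hr1
      set A : ℕ → ℝ := fun i => ‖PowerSeries.coeff i f‖ * r ^ i with hA
      set B : ℕ → ℝ := fun j => ‖PowerSeries.coeff j g‖ * r ^ j with hB
      have hAnonneg : ∀ i, 0 ≤ A i := fun i =>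
        mul_nonneg (norm_nonneg _) (le_of_lt (pow_pos hrpos i))
      have hBnonneg : ∀ j, 0 ≤ B j := fun j =>
        mul_nonneg (norm_nonneg _) (le_of_lt (pow_pos hrpos j))
      have hApos : 0 < A n₀ := mul_pos hfn₀ (pow_pos hrpos _)
      have hA0 : A 0 < A n₀ := by
        have h1 : ‖PowerSeries.coeff 0 f‖ + 1 ≤ ‖PowerSeries.coeff n₀ f‖ * r := by
          have hle : (‖PowerSeries.coeff 0 f‖ + 1) / ‖PowerSeries.coeff n₀ f‖ ≤ r :=
            le_max_right _ _
          calc ‖PowerSeries.coeff 0 f‖ + 1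
              = (‖PowerSeries.coeff 0 f‖ + 1) / ‖PowerSeries.coeff n₀ f‖
                * ‖PowerSeries.coeff n₀ f‖ := by field_simp
            _ ≤ r * ‖PowerSeries.coeff n₀ f‖ :=
                mul_le_mul_of_nonneg_right hle (norm_nonneg _)
            _ = ‖PowerSeries.coeff n₀ f‖ * r := mul_comm _ _
        have h2 : ‖PowerSeries.coeff n₀ f‖ * r ≤ ‖PowerSeries.coeff n₀ f‖ * r ^ n₀ := by
          apply mul_le_mul_of_nonneg_left _ (norm_nonneg _)
          calc r = r ^ 1 := (pow_one r).symm
            _ ≤ r ^ n₀ := pow_le_pow_right₀ hr1 hn₀pos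
        simp only [hA, pow_zero, mul_one]
        linarith
      -- g is nonzero
      have hgne : g ≠ 0 := by
        intro h0
        rw [h0, mul_zero] at hfg
        exact one_ne_zero hfg.symm
      obtain ⟨j₀, hj₀⟩ : ∃ j₀, PowerSeries.coeff j₀ g ≠ 0 := by
        by_contra hall
        push_neg at hall
        exact hgne (PowerSeries.ext fun n => by simpa using hall n)
      have hBj₀ : 0 < B j₀ := mul_pos (norm_pos_iff.mpr hj₀) (pow_pos hrpos _)
      obtain ⟨m, hmle, hmmin⟩ := exists_minmax A (hf r hrpos) hApos
      obtain ⟨n, hnle, hnmin⟩ := exists_minmax B (hg r hrpos) hBj₀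
      have hAm : 0 < A m := lt_of_lt_of_le hApos (hmle n₀)
      have hBn : 0 < B n := lt_of_lt_of_le hBj₀ (hnle j₀)
      have hm0 : 0 < m := by
        rcases Nat.eq_zero_or_pos m with h | h
        · have := hmle n₀
          rw [h] at this
          linarith
        · exact h
      set k := m + n with hk
      have hrk : 0 < r ^ k := pow_pos hrpos k
      -- the coefficient of t^k in f*g is zero
      have hco : (∑ p ∈ Finset.HasAntidiagonal.antidiagonal k,
          PowerSeries.coeff p.1 f * PowerSeries.coeff p.2 g) = 0 := by
        rw [← PowerSeries.coeff_mul, hfg, PowerSeries.coeff_one, if_neg (by omega)]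
      have hmem : ((m, n) : ℕ × ℕ) ∈ Finset.HasAntidiagonal.antidiagonal k := Finset.HasAntidiagonal.mem_antidiagonal.mpr rfl
      rw [← Finset.add_sum_erase _ _ hmem] at hco
      have hT : PowerSeries.coeff m f * PowerSeries.coeff n g =
          -(∑ p ∈ (Finset.HasAntidiagonal.antidiagonal k).erase (m, n),
            PowerSeries.coeff p.1 f * PowerSeries.coeff p.2 g) :=
        eq_neg_of_add_eq_zero_left hco
      have hmain : ‖PowerSeries.coeff m f * PowerSeries.coeff n g‖ * r ^ k
          = A m * B n := by
        rw [hmul, hk, pow_add]; simp only [hA, hB]; ring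
      have hcpos : 0 < ‖PowerSeries.coeff m f * PowerSeries.coeff n g‖ := by
        nlinarith [mul_pos hAm hBn, norm_nonneg (PowerSeries.coeff m f * PowerSeries.coeff n g)]
      have hbound : ∀ p ∈ (Finset.HasAntidiagonal.antidiagonal k).erase (m, n),
          ‖PowerSeries.coeff p.1 f * PowerSeries.coeff p.2 g‖
            < ‖PowerSeries.coeff m f * PowerSeries.coeff n g‖ := by
        rintro ⟨i, j⟩ hp
        obtain ⟨hpne, hpk⟩ := Finset.mem_erase.mp hp
        have hpk' : i + j = k := Finset.HasAntidiagonal.mem_antidiagonal.mp hpk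
        have key : A i * B j < A m * B n := by
          rcases lt_trichotomy i m with h | h | h
          · calc A i * B j ≤ A i * B n :=
                mul_le_mul_of_nonneg_left (hnle j) (hAnonneg i)
              _ < A m * B n := mul_lt_mul_of_pos_right (hmmin i h) hBn
          · exact absurd (by rw [h]; congr 1; omega) hpne
          · have hj : j < n := by omega
            calc A i * B j ≤ A m * B j :=
                mul_le_mul_of_nonneg_right (hmle i) (hBnonneg j)
              _ < A m * B n := mul_lt_mul_of_pos_left (hnmin j hj) hAm
        have h1 : ‖PowerSeries.coeff i f * PowerSeries.coeff j g‖ * r ^ k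
            = A i * B j := by
          rw [hmul, ← hpk', pow_add]; simp only [hA, hB]; ring
        exact lt_of_mul_lt_mul_right (by rw [h1, hmain]; exact key) hrk.le
      have hlt := norm_sum_lt_of_nonarch hna hcpos
        ((Finset.HasAntidiagonal.antidiagonal k).erase (m, n))
        (fun p => PowerSeries.coeff p.1 f * PowerSeries.coeff p.2 g) hbound
      rw [← norm_neg, ← hT] at hlt
      exact lt_irrefl _ hlt
    -- Step 2: conclude f is a constant unit.
    refine ⟨PowerSeries.constantCoeff f, ?_, ?_⟩
    · apply IsUnit.of_mul_eq_one (PowerSeries.constantCoeff g)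
      have := congrArg (PowerSeries.constantCoeff) hfg
      simpa using this
    · ext n
      cases n with
      | zero => simp [PowerSeries.coeff_zero_eq_constantCoeff]
      | succ n =>
        rw [hvanish (n + 1) (by omega), PowerSeries.coeff_C, if_neg (by omega)]
  · intro c hc
    obtain ⟨u, rfl⟩ := hc
    refine ⟨PowerSeries.C (↑u⁻¹ : R), ?_, ?_⟩
    · intro r hrpos
      apply Tendsto.congr' _ tendsto_const_nhds
      filter_upwards [eventually_ge_atTop 1] with n hn
      rw [PowerSeries.coeff_C, if_neg (by omega)]
      simp
    · rw [← map_mul]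
      simp
end
end

section
/- Let h be an element of A_R(𝔾_m), the ring of everywhere-convergent Laurent series over a complete non-Archimedean integral domain R, and let τ be the automorphism given by the substitution t ↦ t^{-1}. If h · τ(h) = 1, then h = ± t^n for some integer n. -/
open Filter Topology

noncomputable section

/-- The coefficient condition defining the ring `A_R(𝔾_m)` of everywhere convergent
Laurent series. -/
def GmOK {R : Type*} [NormedCommRing R] (c : ℤ → R) : Prop :=
  ∀ r : ℝ, 0 < r → Tendsto (fun n : ℤ => ‖c n‖ * r ^ |n|) (cocompact ℤ) (𝓝 0)

/-- A real-valued function on `ℤ` tending to zero and positive somewhere has a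
"largest maximizer". -/
lemma exists_argmax_int (g : ℤ → ℝ) (hten : Tendsto g cofinite (𝓝 0))
    {a : ℤ} (ha : 0 < g a) :
    ∃ p, (∀ u, g u ≤ g p) ∧ (∀ u, p < u → g u < g p) := by
  have hfin : {u : ℤ | g a ≤ g u}.Finite := by
    have h := hten.eventually (gt_mem_nhds ha)
    rw [eventually_cofinite] at h
    exact h.subset fun u hu => not_lt.mpr hu
  have haF : a ∈ hfin.toFinset := by simp
  obtain ⟨m, hmF, hm⟩ := hfin.toFinset.exists_max_image g ⟨a, haF⟩
  have hglob : ∀ u, g u ≤ g m := by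
    intro u
    by_cases hu : u ∈ hfin.toFinset
    · exact hm u hu
    · have h2 : ¬ g a ≤ g u := by simpa using hu
      exact (lt_of_not_ge h2).le.trans (hm a haF)
  have hPfin : {u : ℤ | g u = g m}.Finite := by
    refine hfin.subset fun u hu => ?_
    have hu' : g u = g m := hu
    rw [Set.mem_setOf_eq, hu']
    exact hm a haF
  have hmP : m ∈ hPfin.toFinset := by simp
  set p := hPfin.toFinset.max' ⟨m, hmP⟩ with hp
  have hpP : p ∈ hPfin.toFinset := Finset.max'_mem _ _
  have hgp : g p = g m := by simpa using hpP
  refine ⟨p, fun u => hgp ▸ hglob u, fun u hu => ?_⟩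
  rcases lt_or_eq_of_le (hglob u) with h | h
  · rw [hgp]; exact h
  · exfalso
    have huP : u ∈ hPfin.toFinset := by simpa using h
    exact absurd (Finset.le_max' _ u huP) (not_le.mpr hu)

lemma zpow_mul_inv_zpow {r : ℝ} (hr : 0 < r) (v w : ℤ) :
    r ^ v * r⁻¹ ^ w = r ^ (v - w) := by
  rw [sub_eq_add_neg, zpow_add₀ hr.ne', zpow_neg, ← inv_zpow]

lemma zpow_le_max_pow_abs {r : ℝ} (hr : 0 < r) (u : ℤ) :
    r ^ u ≤ (max r r⁻¹) ^ |u| := by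
  rcases le_or_gt 0 u with h | h
  · obtain ⟨k, rfl⟩ := Int.eq_ofNat_of_zero_le h
    rw [abs_of_nonneg h]
    rw [zpow_natCast, zpow_natCast]
    exact pow_le_pow_left₀ hr.le (le_max_left _ _) k
  · have h1 : r ^ u = r⁻¹ ^ (-u) := by
      rw [inv_zpow, ← zpow_neg, neg_neg]
    obtain ⟨k, hk⟩ := Int.eq_ofNat_of_zero_le (by omega : (0:ℤ) ≤ -u)
    rw [abs_of_neg h, h1, hk, zpow_natCast, zpow_natCast]
    exact pow_le_pow_left₀ (inv_pos.mpr hr).le (le_max_right _ _) k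

/-- Let `h ∈ A_R(𝔾_m)` and let `τ` be the substitution `t ↦ t⁻¹`.
If `h · τ(h) = 1` then `h = ± t^n` for some integer `n`. -/
theorem norm_one_in_Gm {R : Type*} [NormedCommRing R] [IsDomain R] [CompleteSpace R]
    (hna : IsNonarchimedean (norm : R → ℝ))
    (hmul : ∀ x y : R, ‖x * y‖ = ‖x‖ * ‖y‖)
    (c : ℤ → R) (hc : GmOK c)
    (hunit : lmul c (fun n => c (-n)) = fun n => if n = 0 then (1 : R) else 0) :
    ∃ n : ℤ, (c = fun m => if m = n then (1 : R) else 0) ∨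
             (c = fun m => if m = n then (-1 : R) else 0) := by
  haveI : IsUltrametricDist R :=
    IsUltrametricDist.isUltrametricDist_of_isNonarchimedean_norm hna
  -- coefficients tend to zero at any weight
  have hcof : ∀ r : ℝ, 0 < r → Tendsto (fun u : ℤ => ‖c u‖ * r ^ u) cofinite (𝓝 0) := by
    intro r hr
    have hR : (0:ℝ) < max r r⁻¹ := lt_max_of_lt_left hr
    have h1 := hc (max r r⁻¹) hR
    rw [cocompact_eq_cofinite] at h1
    refine squeeze_zero (fun u => by positivity) (fun u => ?_) h1
    exact mul_le_mul_of_nonneg_left (zpow_le_max_pow_abs hr u) (norm_nonneg _)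
  -- there is a nonzero coefficient
  have hex : ∃ a, c a ≠ 0 := by
    by_contra h
    push_neg at h
    have h0 := congrFun hunit 0
    simp [lmul, h] at h0
  obtain ⟨a, ha⟩ := hex
  have hna0 : 0 < ‖c a‖ := norm_pos_iff.mpr ha
  -- global bound on coefficients
  have h1 : Tendsto (fun u : ℤ => ‖c u‖) cofinite (𝓝 0) := by
    simpa using hcof 1 one_pos
  obtain ⟨m₁, hm₁, -⟩ := exists_argmax_int _ h1 hna0
  -- KEY: for every r > 0 there is a common maximizer for weights r and r⁻¹
  have key : ∀ r : ℝ, 0 < r → ∃ m : ℤ,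
      (∀ u, ‖c u‖ * r ^ u ≤ ‖c m‖ * r ^ m) ∧
      (∀ u, ‖c u‖ * r⁻¹ ^ u ≤ ‖c m‖ * r⁻¹ ^ m) := by
    intro r hr
    have hr' : (0:ℝ) < r⁻¹ := inv_pos.mpr hr
    set g : ℤ → ℝ := fun u => ‖c u‖ * r ^ u with hg
    set g' : ℤ → ℝ := fun u => ‖c u‖ * r⁻¹ ^ u with hg'
    have hga : 0 < g a := mul_pos hna0 (zpow_pos hr a)
    have hga' : 0 < g' a := mul_pos hna0 (zpow_pos hr' a)
    obtain ⟨p, hp1, hp2⟩ := exists_argmax_int g (hcof r hr) hga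
    have htneg : Tendsto (fun u : ℤ => g' (-u)) cofinite (𝓝 0) :=
      (hcof r⁻¹ hr').comp neg_injective.tendsto_cofinite
    obtain ⟨q', hq1, hq2⟩ := exists_argmax_int (fun u => g' (-u)) htneg
      (a := -a) (by simpa using hga')
    set q := -q' with hq
    have hq1' : ∀ u, g' u ≤ g' q := fun u => by simpa using hq1 (-u)
    have hq2' : ∀ u, u < q → g' u < g' q := by
      intro u hu
      have h2 := hq2 (-u) (by omega)
      simpa using h2
    have hgp : 0 < g p := lt_of_lt_of_le hga (hp1 a)
    have hgq : 0 < g' q := lt_of_lt_of_le hga' (hq1' a)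
    have hcp : 0 < ‖c p‖ := by
      by_contra h
      push_neg at h
      have := zpow_pos hr p
      have hgp' : g p = ‖c p‖ * r ^ p := rfl
      nlinarith
    have hcq : 0 < ‖c q‖ := by
      by_contra h
      push_neg at h
      have := zpow_pos hr' q
      have hgq' : g' q = ‖c q‖ * r⁻¹ ^ q := rfl
      nlinarith
    set n := p - q with hn
    set f : ℤ → R := fun u => c u * c (u - n) with hf
    have hfn : ∀ u, ‖f u‖ = ‖c u‖ * ‖c (u - n)‖ := fun u => hmul _ _
    set B := ‖c p‖ * ‖c q‖ with hB
    have hBpos : 0 < B := mul_pos hcp hcq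
    have hpq : p - n = q := by omega
    have hfp : ‖f p‖ = B := by rw [hfn, hpq]
    -- strict bound on all other terms
    have hlt : ∀ u, u ≠ p → ‖f u‖ < B := by
      intro u hu
      rcases eq_or_ne (c u) 0 with h0 | h0
      · rw [hfn, h0]; simpa using hBpos
      rcases eq_or_ne (c (u - n)) 0 with h0' | h0'
      · rw [hfn, h0']; simpa using hBpos
      have hcu : 0 < ‖c u‖ := norm_pos_iff.mpr h0
      have hcun : 0 < ‖c (u - n)‖ := norm_pos_iff.mpr h0'
      have hprod : g u * g' (u - n) < g p * g' q := by
        rcases lt_or_gt_of_ne hu with h | h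
        · have h2 : g' (u - n) < g' q := hq2' _ (by omega)
          exact mul_lt_mul' (hp1 u) h2 (mul_pos hcun (zpow_pos hr' _)).le hgp
        · have h2 : g u < g p := hp2 u h
          calc g u * g' (u - n) < g p * g' (u - n) :=
                mul_lt_mul_of_pos_right h2 (mul_pos hcun (zpow_pos hr' _))
            _ ≤ g p * g' q := mul_le_mul_of_nonneg_left (hq1' _) hgp.le
      have e1 : g u * g' (u - n) = (‖c u‖ * ‖c (u - n)‖) * r ^ n := by
        have := zpow_mul_inv_zpow hr u (u - n)
        have h3 : u - (u - n) = n := by omega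
        rw [h3] at this
        show (‖c u‖ * r ^ u) * (‖c (u - n)‖ * r⁻¹ ^ (u - n)) = _
        rw [← this]; ring
      have e2 : g p * g' q = B * r ^ n := by
        have := zpow_mul_inv_zpow hr p q
        rw [← hn] at this
        show (‖c p‖ * r ^ p) * (‖c q‖ * r⁻¹ ^ q) = _
        rw [hB, ← this]; ring
      rw [e1, e2] at hprod
      rw [hfn]
      exact lt_of_mul_lt_mul_right hprod (zpow_pos hr n).le
    -- f is summable
    have hften : Tendsto f cofinite (𝓝 0) := by
      rw [tendsto_zero_iff_norm_tendsto_zero]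
      have hshift : Tendsto (fun u : ℤ => ‖c (u - n)‖) cofinite (𝓝 0) :=
        h1.comp (sub_left_injective.tendsto_cofinite)
      have h2 : Tendsto (fun u : ℤ => ‖c m₁‖ * ‖c (u - n)‖) cofinite (𝓝 0) := by
        simpa using hshift.const_mul ‖c m₁‖
      refine squeeze_zero (fun u => norm_nonneg _) (fun u => ?_) h2
      rw [hfn]
      exact mul_le_mul_of_nonneg_right (hm₁ u) (norm_nonneg _)
    have hsum : Summable f := NonarchimedeanAddGroup.summable_of_tendsto_cofinite_zero hften
    -- a bound C < B on all terms except p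
    have hE : {u : ℤ | B/2 ≤ ‖f u‖}.Finite := by
      have h := (tendsto_zero_iff_norm_tendsto_zero.mp hften).eventually
        (gt_mem_nhds (half_pos hBpos))
      rw [eventually_cofinite] at h
      exact h.subset fun u hu => not_lt.mpr hu
    have hF2ne : (insert p hE.toFinset).Nonempty := ⟨p, Finset.mem_insert_self _ _⟩
    set C := (insert p hE.toFinset).sup' hF2ne
      (fun u => if u = p then B/2 else ‖f u‖) with hC
    have hChalf : B/2 ≤ C := by
      have h2 : (if p = p then B/2 else ‖f p‖) ≤ C :=
        Finset.le_sup' (fun u => if u = p then B/2 else ‖f u‖)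
          (Finset.mem_insert_self p hE.toFinset)
      rwa [if_pos rfl] at h2
    have hC0 : 0 ≤ C := le_trans (half_pos hBpos).le hChalf
    have hClt : C < B := by
      rw [hC, Finset.sup'_lt_iff]
      intro u huF
      show (if u = p then B/2 else ‖f u‖) < B
      by_cases h : u = p
      · rw [if_pos h]; linarith
      · rw [if_neg h]; exact hlt u h
    have hCge : ∀ u, u ≠ p → ‖f u‖ ≤ C := by
      intro u hu
      by_cases h : u ∈ insert p hE.toFinset
      · have h2 : (if u = p then B/2 else ‖f u‖) ≤ C :=
          Finset.le_sup' (fun u => if u = p then B/2 else ‖f u‖) h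
        rwa [if_neg hu] at h2
      · have hu2 : ‖f u‖ < B/2 := by
          by_contra h2
          push_neg at h2
          exact h (Finset.mem_insert_of_mem (by simpa using h2))
        linarith
    -- the coefficient at n of h · τ(h)
    have hn1 := congrFun hunit n
    simp only [lmul] at hn1
    have hn' : (∑' u, f u) = if n = 0 then (1:R) else 0 := by
      rw [← hn1]
      exact tsum_congr fun u => by rw [hf]; simp [neg_sub]
    have hnz : (∑' u, f u) ≠ 0 := by
      intro h0
      rw [Summable.tsum_eq_add_tsum_ite hsum p] at h0
      have hTle : ‖∑' u, ite (u = p) (0:R) (f u)‖ ≤ C := by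
        refine IsUltrametricDist.norm_tsum_le_of_forall_le_of_nonneg hC0 fun u => ?_
        by_cases h : u = p
        · simp [h, hC0]
        · rw [if_neg h]; exact hCge u h
      have heq : f p = -(∑' u, ite (u = p) (0:R) (f u)) :=
        eq_neg_of_add_eq_zero_left h0
      have hle : ‖f p‖ ≤ C := by rw [heq, norm_neg]; exact hTle
      rw [hfp] at hle
      linarith
    have hn0 : n = 0 := by
      by_contra h
      apply hnz
      rw [hn', if_neg h]
    have hp_eq_q : p = q := by omega
    exact ⟨p, fun u => hp1 u, fun u => by rw [hp_eq_q]; exact hq1' u⟩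
  -- from `key`, the support of `c` is a singleton
  have hbound : ∀ x y : ℤ, c x ≠ 0 → c y ≠ 0 → x < y → False := by
    intro x y hx hy hxy
    have hxn : 0 < ‖c x‖ := norm_pos_iff.mpr hx
    have hyn : 0 < ‖c y‖ := norm_pos_iff.mpr hy
    have hxy0 : 0 < ‖c x‖ * ‖c y‖ := mul_pos hxn hyn
    set r : ℝ := max 1 (‖c m₁‖ ^ 2 / (‖c x‖ * ‖c y‖) + 1) with hrdef
    have hr1 : (1:ℝ) ≤ r := le_max_left _ _
    have hr0 : (0:ℝ) < r := lt_of_lt_of_le one_pos hr1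
    obtain ⟨m, hm, hm'⟩ := key r hr0
    have h1 : ‖c y‖ * r ^ y ≤ ‖c m‖ * r ^ m := hm y
    have h2 : ‖c x‖ * r⁻¹ ^ x ≤ ‖c m‖ * r⁻¹ ^ m := hm' x
    have h3 : (‖c x‖ * ‖c y‖) * r ^ (y - x) ≤ ‖c m₁‖ ^ 2 := by
      have h4 := mul_le_mul h1 h2 (by positivity) (by positivity)
      have e1 : (‖c y‖ * r ^ y) * (‖c x‖ * r⁻¹ ^ x) = (‖c x‖ * ‖c y‖) * r ^ (y - x) := by
        rw [← zpow_mul_inv_zpow hr0 y x]; ring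
      have e2 : (‖c m‖ * r ^ m) * (‖c m‖ * r⁻¹ ^ m) = ‖c m‖ ^ 2 := by
        have h9 : r ^ m * r⁻¹ ^ m = 1 := by
          rw [zpow_mul_inv_zpow hr0, sub_self, zpow_zero]
        calc (‖c m‖ * r ^ m) * (‖c m‖ * r⁻¹ ^ m)
            = (‖c m‖ * ‖c m‖) * (r ^ m * r⁻¹ ^ m) := by ring
          _ = ‖c m‖ ^ 2 := by rw [h9, mul_one, sq]
      rw [e1, e2] at h4
      exact h4.trans (pow_le_pow_left₀ (norm_nonneg _) (hm₁ m) 2)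
    have h5 : r ≤ r ^ (y - x) := by
      have := zpow_le_zpow_right₀ hr1 (by omega : (1:ℤ) ≤ y - x)
      simpa using this
    have h6 : ‖c m₁‖ ^ 2 / (‖c x‖ * ‖c y‖) + 1 ≤ r := le_max_right _ _
    have h7 : (‖c x‖ * ‖c y‖) * r ≤ ‖c m₁‖ ^ 2 :=
      le_trans (mul_le_mul_of_nonneg_left h5 hxy0.le) h3
    have h8 : (‖c x‖ * ‖c y‖) * (‖c m₁‖ ^ 2 / (‖c x‖ * ‖c y‖) + 1) ≤ ‖c m₁‖ ^ 2 :=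
      le_trans (mul_le_mul_of_nonneg_left h6 hxy0.le) h7
    rw [mul_add, mul_div_cancel₀ _ hxy0.ne'] at h8
    linarith
  have hz : ∀ u, u ≠ a → c u = 0 := by
    intro u hu
    by_contra h
    rcases lt_trichotomy u a with h' | h' | h'
    · exact hbound u a h ha h'
    · exact hu h'
    · exact hbound a u ha h h'
  have h0 := congrFun hunit 0
  simp only [lmul, zero_sub, neg_neg, if_pos] at h0
  have hsingle : (∑' u : ℤ, c u * c u) = c a * c a :=
    tsum_eq_single a fun u hu => by rw [hz u hu, zero_mul]
  rw [hsingle] at h0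
  refine ⟨a, ?_⟩
  rcases mul_self_eq_one_iff.mp h0 with h | h
  · left
    funext u
    by_cases hu : u = a
    · simp [hu, h]
    · simp [hu, hz u hu]
  · right
    funext u
    by_cases hu : u = a
    · simp [hu, h]
    · simp [hu, hz u hu]
end
end

section
/- Let R be a field complete with respect to a non-Archimedean absolute value and let F ∈ A_R[u] be a polynomial in u over the ring A_R of entire series, monic and non-constant in u. Then the natural map A_R[u] → R{t,u}/(F·R{t,u}) induces an injective A_R-algebra morphism A_R[u]/(F·A_R[u]) → R{t,u}/(F·R{t,u}). Equivalently, A_R[u] ∩ F·R{t,u} = F·A_R[u]. -/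
open Filter Topology

noncomputable section

/-- Coefficient condition defining `R{t,u}`. -/
def T2OK {R : Type*} [NormedField R] (c : ℕ × ℕ → R) : Prop :=
  ∀ r : ℝ, 0 < r →
    Tendsto (fun mn : ℕ × ℕ => ‖c mn‖ * r ^ (mn.1 + mn.2)) (cocompact (ℕ × ℕ)) (𝓝 0)

/-- Multiplication of two-variable power series on coefficients. -/
def mul2 {R : Type*} [CommRing R] (c d : ℕ × ℕ → R) : ℕ × ℕ → R := fun mn =>
  ∑ i ∈ Finset.range (mn.1 + 1), ∑ j ∈ Finset.range (mn.2 + 1),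
    c (i, j) * d (mn.1 - i, mn.2 - j)

/-- Condition on a sequence of coefficients defining an entire series over `R`. -/
def EntireSeq {R : Type*} [NormedField R] (a : ℕ → R) : Prop :=
  ∀ r : ℝ, 0 < r → Tendsto (fun n : ℕ => ‖a n‖ * r ^ n) atTop (𝓝 0)

/-- Condition describing elements of the polynomial ring `A_R[u] ⊆ R{t,u}`:
polynomials in `u` whose coefficients are entire series in `t`. -/
def PolyUOK {R : Type*} [NormedField R] (c : ℕ × ℕ → R) : Prop :=
  (∃ N : ℕ, ∀ p : ℕ × ℕ, N < p.2 → c p = 0) ∧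
  (∀ n : ℕ, EntireSeq (fun m => c (m, n)))

lemma na_sum_le {R : Type*} [NormedField R] (hna : IsNonarchimedean (norm : R → ℝ))
    {α : Type*} (s : Finset α) (f : α → R) {c : ℝ} (hc : 0 ≤ c)
    (h : ∀ a ∈ s, ‖f a‖ ≤ c) : ‖∑ a ∈ s, f a‖ ≤ c := by
  induction s using Finset.cons_induction with
  | empty => simpa
  | cons a s ha ih =>
    rw [Finset.sum_cons]
    exact le_trans (hna _ _) (max_le (h a (by simp)) (ih fun b hb => h b (by simp [hb])))

lemma bound_of_T2OK {R : Type*} [NormedField R] {c : ℕ × ℕ → R} (h : T2OK c)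
    {s : ℝ} (hs : 0 < s) :
    ∃ B : ℝ, 1 ≤ B ∧ ∀ p : ℕ × ℕ, ‖c p‖ * s ^ (p.1 + p.2) ≤ B := by
  have h1 := h s hs
  rw [Filter.cocompact_eq_cofinite] at h1
  have hev : ∀ᶠ p in (cofinite : Filter (ℕ × ℕ)), ‖c p‖ * s ^ (p.1 + p.2) < 1 :=
    h1.eventually_lt_const one_pos
  rw [Filter.eventually_cofinite] at hev
  set f : ℕ × ℕ → ℝ := fun p => ‖c p‖ * s ^ (p.1 + p.2) with hf
  have hsum : (0:ℝ) ≤ ∑ p ∈ hev.toFinset, |f p| := Finset.sum_nonneg fun q _ => abs_nonneg _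
  refine ⟨1 + ∑ p ∈ hev.toFinset, |f p|, by linarith, fun p => ?_⟩
  have hfp : f p = ‖c p‖ * s ^ (p.1 + p.2) := rfl
  by_cases hp : f p < 1
  · linarith
  · have hmem : p ∈ hev.toFinset := by simpa [Set.Finite.mem_toFinset] using hp
    have h2 : |f p| ≤ ∑ q ∈ hev.toFinset, |f q| :=
      Finset.single_le_sum (fun q _ => abs_nonneg (f q)) hmem
    have h3 : f p ≤ |f p| := le_abs_self _
    linarith

lemma entire_col_of_T2OK {R : Type*} [NormedField R] {c : ℕ × ℕ → R} (h : T2OK c)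
    (n : ℕ) : EntireSeq (fun m => c (m, n)) := by
  intro r hr
  have h1 := h r hr
  rw [Filter.cocompact_eq_cofinite] at h1
  have hmap : Tendsto (fun m : ℕ => ((m, n) : ℕ × ℕ)) cofinite cofinite :=
    Function.Injective.tendsto_cofinite (fun a b hab => by simpa using hab)
  have h2 := (h1.comp hmap)
  rw [Nat.cofinite_eq_atTop] at h2
  have h3 := h2.mul_const ((r ^ n)⁻¹)
  have heq : (fun m : ℕ => ‖c (m, n)‖ * r ^ m) =
      fun m : ℕ => (‖c ((m, n) : ℕ × ℕ)‖ * r ^ ((m, n).1 + (m, n).2)) * (r ^ n)⁻¹ := by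
    funext m
    have hrn : (r : ℝ) ^ n ≠ 0 := pow_ne_zero _ hr.ne'
    field_simp
    rw [pow_add, mul_assoc]
  rw [heq]
  simpa using h3

lemma T2OK_of_PolyUOK {R : Type*} [NormedField R] {c : ℕ × ℕ → R} (hc : PolyUOK c) :
    T2OK c := by
  intro r hr
  rw [Filter.cocompact_eq_cofinite, Metric.tendsto_nhds]
  intro ε hε
  rw [Filter.eventually_cofinite]
  obtain ⟨N, hN⟩ := hc.1
  have hcol : ∀ n : ℕ, {m : ℕ | ¬ ‖c (m, n)‖ * r ^ (m + n) < ε}.Finite := by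
    intro n
    have h1 := (hc.2 n r hr).mul_const (r ^ n)
    rw [zero_mul] at h1
    have heq : (fun m : ℕ => ‖c (m, n)‖ * r ^ m * r ^ n) =
        fun m : ℕ => ‖c (m, n)‖ * r ^ (m + n) := by
      funext m; rw [pow_add, mul_assoc]
    rw [heq] at h1
    have h2 : ∀ᶠ m in atTop, ‖c (m, n)‖ * r ^ (m + n) < ε := h1.eventually_lt_const hε
    rw [← Nat.cofinite_eq_atTop, Filter.eventually_cofinite] at h2
    exact h2
  have hsub : {p : ℕ × ℕ | ¬ dist (‖c p‖ * r ^ (p.1 + p.2)) 0 < ε} ⊆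
      ⋃ n ∈ Finset.range (N + 1), (fun m => ((m, n) : ℕ × ℕ)) ''
        {m : ℕ | ¬ ‖c (m, n)‖ * r ^ (m + n) < ε} := by
    intro p hp
    simp only [Set.mem_setOf_eq, Real.dist_eq, sub_zero] at hp
    have habs : |‖c p‖ * r ^ (p.1 + p.2)| = ‖c p‖ * r ^ (p.1 + p.2) :=
      abs_of_nonneg (by positivity)
    rw [habs] at hp
    have hp2 : p.2 ≤ N := by
      by_contra hcon
      push_neg at hcon
      rw [hN p hcon] at hp
      simp at hp
      linarith
    simp only [Set.mem_iUnion, Finset.mem_coe, Finset.mem_range]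
    exact ⟨p.2, by omega, p.1, hp, rfl⟩
  refine Set.Finite.subset ?_ hsub
  exact Set.Finite.biUnion (Finset.range (N + 1)).finite_toSet
    (fun n _ => (hcol n).image _)


lemma mul2_top {R : Type*} [NormedField R] (F h : ℕ × ℕ → R) (D : ℕ) (hD : 0 < D)
    (hmonic₀ : F (0, D) = 1) (hmonic : ∀ m : ℕ, 0 < m → F (m, D) = 0)
    (hdeg : ∀ p : ℕ × ℕ, D < p.2 → F p = 0) (m n : ℕ) :
    mul2 F h (m, n + D) = h (m, n) +
      ∑ i ∈ Finset.range (m + 1), ∑ j ∈ Finset.range D, F (i, j) * h (m - i, n + D - j) := by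
  unfold mul2
  simp only
  have step1 : ∀ i : ℕ, ∑ j ∈ Finset.range (n + D + 1), F (i, j) * h (m - i, n + D - j) =
      (∑ j ∈ Finset.range D, F (i, j) * h (m - i, n + D - j)) + F (i, D) * h (m - i, n) := by
    intro i
    have hsub : Finset.range (D + 1) ⊆ Finset.range (n + D + 1) :=
      Finset.range_subset_range.2 (by omega)
    rw [← Finset.sum_subset hsub (fun j hj hj' => ?_), Finset.sum_range_succ]
    · have : n + D - D = n := by omega
      rw [this]
    · have hjD : D < j := by
        simp only [Finset.mem_range] at hj hj'
        omega
      rw [hdeg (i, j) hjD, zero_mul]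
  rw [Finset.sum_congr rfl (fun i _ => step1 i), Finset.sum_add_distrib]
  have hsingle : ∑ i ∈ Finset.range (m + 1), F (i, D) * h (m - i, n) = h (m, n) := by
    rw [Finset.sum_eq_single 0]
    · simp [hmonic₀]
    · intro i _ h0
      rw [hmonic i (Nat.pos_of_ne_zero h0), zero_mul]
    · intro h0
      exact absurd (Finset.mem_range.2 (by omega)) h0
  rw [hsingle]
  ring

lemma key_vanish {R : Type*} [NormedField R] (hna : IsNonarchimedean (norm : R → ℝ))
    (F h : ℕ × ℕ → R) (D N : ℕ) (hD : 0 < D)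
    (hmonic₀ : F (0, D) = 1) (hmonic : ∀ m : ℕ, 0 < m → F (m, D) = 0)
    (hdeg : ∀ p : ℕ × ℕ, D < p.2 → F p = 0)
    (C : ℝ) (hC1 : 1 ≤ C) (hCF : ∀ p : ℕ × ℕ, ‖F p‖ ≤ C)
    (hT : T2OK h) (hG0 : ∀ p : ℕ × ℕ, N < p.2 → mul2 F h p = 0) :
    ∀ m n : ℕ, N < n + D → h (m, n) = 0 := by
  set s : ℝ := C + 1 with hs_def
  have hs1 : 1 < s := by simp [hs_def]; linarith
  have hs0 : 0 < s := by linarith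
  have hC0 : (0:ℝ) ≤ C := by linarith
  obtain ⟨B, hB1, hB⟩ := bound_of_T2OK hT hs0
  have hB0 : (0:ℝ) ≤ B := by linarith
  have main : ∀ t m n : ℕ, N < n + D → ‖h (m, n)‖ ≤ C ^ t * B / s ^ (n + t) := by
    intro t
    induction t with
    | zero =>
      intro m n hn
      have h1 := hB (m, n)
      simp only at h1
      have h2 : (s:ℝ) ^ n ≤ s ^ (m + n) := pow_le_pow_right₀ hs1.le (by omega)
      have h3 : ‖h (m, n)‖ * s ^ n ≤ B := by
        nlinarith [norm_nonneg (h (m, n))]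
      simp only [pow_zero, one_mul, Nat.add_zero]
      rw [le_div_iff₀ (pow_pos hs0 n)]
      exact h3
    | succ t ih =>
      intro m n hn
      have hG := hG0 (m, n + D) (by simpa using hn)
      rw [mul2_top F h D hD hmonic₀ hmonic hdeg m n] at hG
      have hmn : h (m, n) = -∑ i ∈ Finset.range (m + 1), ∑ j ∈ Finset.range D,
          F (i, j) * h (m - i, n + D - j) := eq_neg_of_add_eq_zero_left hG
      rw [hmn, norm_neg]
      have hcpos : (0:ℝ) ≤ C ^ (t + 1) * B / s ^ (n + (t + 1)) := by positivity
      apply na_sum_le hna _ _ hcpos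
      intro i _
      apply na_sum_le hna _ _ hcpos
      intro j hj
      have hjD : j < D := Finset.mem_range.mp hj
      rw [norm_mul]
      have hIH := ih (m - i) (n + D - j) (by omega)
      have hexp : n + 1 + t ≤ (n + D - j) + t := by omega
      have hpow : s ^ (n + 1 + t) ≤ s ^ ((n + D - j) + t) := pow_le_pow_right₀ hs1.le hexp
      calc ‖F (i, j)‖ * ‖h (m - i, n + D - j)‖
          ≤ C * (C ^ t * B / s ^ ((n + D - j) + t)) :=
            mul_le_mul (hCF _) hIH (norm_nonneg _) hC0
        _ ≤ C * (C ^ t * B / s ^ (n + 1 + t)) := by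
            gcongr
        _ = C ^ (t + 1) * B / s ^ (n + (t + 1)) := by
            have : n + (t + 1) = n + 1 + t := by omega
            rw [this, pow_succ]
            ring
  intro m n hn
  have hlim : Tendsto (fun t : ℕ => C ^ t * B / s ^ (n + t)) atTop (𝓝 0) := by
    have heq : (fun t : ℕ => C ^ t * B / s ^ (n + t)) =
        fun t : ℕ => (B / s ^ n) * (C / s) ^ t := by
      funext t
      rw [pow_add, div_pow]
      field_simp
    rw [heq]
    have hcs : Tendsto (fun t : ℕ => (C / s) ^ t) atTop (𝓝 0) :=
      tendsto_pow_atTop_nhds_zero_of_lt_one (by positivity)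
        (by rw [div_lt_one hs0]; linarith)
    simpa using hcs.const_mul (B / s ^ n)
  have hle : ‖h (m, n)‖ ≤ 0 := ge_of_tendsto' hlim (fun t => main t m n hn)
  exact norm_le_zero_iff.mp hle


/-- Let `R` be a complete non-Archimedean valued field and `F ∈ A_R[u]` monic and
non-constant in `u` (of degree `D ≥ 1` in `u`). Then `A_R[u] ∩ F·R{t,u} = F·A_R[u]`;
i.e. the natural map `A_R[u]/(F·A_R[u]) → R{t,u}/(F·R{t,u})` is injective. -/
theorem poly_ideal_contraction {R : Type*} [NormedField R] [CompleteSpace R]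
    (hna : IsNonarchimedean (norm : R → ℝ))
    (F : ℕ × ℕ → R) (hF : PolyUOK F)
    (D : ℕ) (hD : 0 < D)
    (hmonic₀ : F (0, D) = 1) (hmonic : ∀ m : ℕ, 0 < m → F (m, D) = 0)
    (hdeg : ∀ p : ℕ × ℕ, D < p.2 → F p = 0) :
    ∀ G : ℕ × ℕ → R, PolyUOK G →
      ((∃ h : ℕ × ℕ → R, T2OK h ∧ G = mul2 F h) ↔
       (∃ Q : ℕ × ℕ → R, PolyUOK Q ∧ G = mul2 F Q)) := by
  intro G hG
  constructor
  · rintro ⟨h, hT, hGh⟩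
    obtain ⟨N, hN⟩ := hG.1
    obtain ⟨C, hC1, hCF⟩ := bound_of_T2OK (T2OK_of_PolyUOK hF) one_pos
    have hCF' : ∀ p : ℕ × ℕ, ‖F p‖ ≤ C := fun p => by simpa using hCF p
    have hG0 : ∀ p : ℕ × ℕ, N < p.2 → mul2 F h p = 0 := fun p hp => by
      rw [← hGh]; exact hN p hp
    have hvan := key_vanish hna F h D N hD hmonic₀ hmonic hdeg C hC1 hCF' hT hG0
    refine ⟨h, ⟨⟨N, fun p hp => hvan p.1 p.2 (by omega)⟩,
      fun n => entire_col_of_T2OK hT n⟩, hGh⟩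
  · rintro ⟨Q, hQ, hGQ⟩
    exact ⟨Q, T2OK_of_PolyUOK hQ, hGQ⟩
end
end

section
/- Let R be an integral domain with a non-Archimedean absolute value and A_R the ring of entire power series over R. If P ∈ R[t] is a nonzero polynomial and h ∈ A_R divides P in A_R, then h is a polynomial, i.e., h ∈ R[t]. -/
open Filter Topology

noncomputable section

/-- The power series attached to a polynomial over `R`. -/
def polyPS {R : Type*} [CommRing R] (q : Polynomial R) : PowerSeries R :=
  PowerSeries.mk fun n => q.coeff n

/-- Norm of a finite sum is `< c` if each term is, for nonarchimedean norms. -/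
lemma aux_norm_sum_lt {R : Type*} [NormedCommRing R]
    (hna : IsNonarchimedean (norm : R → ℝ)) {ι : Type*} (s : Finset ι) (F : ι → R)
    {c : ℝ} (hc : 0 < c) (hs : ∀ x ∈ s, ‖F x‖ < c) : ‖∑ x ∈ s, F x‖ < c := by
  classical
  induction s using Finset.induction_on with
  | empty => simpa using hc
  | @insert a s' hx ih =>
    rw [Finset.sum_insert hx]
    calc ‖F a + ∑ x ∈ s', F x‖ ≤ max ‖F a‖ ‖∑ x ∈ s', F x‖ := hna _ _
    _ < c := max_lt (hs a (Finset.mem_insert_self a s'))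
        (ih fun x hx' => hs x (Finset.mem_insert_of_mem hx'))

/-- Nonarchimedean lower bound: if `‖v‖ < ‖u‖` then `‖u‖ ≤ ‖u + v‖`. -/
lemma aux_norm_add_ge {R : Type*} [NormedCommRing R]
    (hna : IsNonarchimedean (norm : R → ℝ)) {u v : R} (hlt : ‖v‖ < ‖u‖) :
    ‖u‖ ≤ ‖u + v‖ := by
  have h1 : ‖u‖ ≤ max ‖u + v‖ ‖v‖ := by
    have := hna (u + v) (-v)
    simpa using this
  rcases max_cases ‖u + v‖ ‖v‖ with ⟨he, _⟩ | ⟨he, _⟩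
  · rwa [he] at h1
  · rw [he] at h1; linarith

/-- For an entire series with a nonzero coefficient, there is a largest index maximizing
the weighted coefficient norms. -/
lemma aux_exists_max_idx {R : Type*} [NormedCommRing R] {f : PowerSeries R}
    (hf : EntireOK f) {r : ℝ} (hr : 0 < r) {n : ℕ} (hn : PowerSeries.coeff n f ≠ 0) :
    ∃ i, (∀ a, ‖PowerSeries.coeff a f‖ * r ^ a ≤ ‖PowerSeries.coeff i f‖ * r ^ i) ∧
      ∀ a, i < a → ‖PowerSeries.coeff a f‖ * r ^ a < ‖PowerSeries.coeff i f‖ * r ^ i := by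
  classical
  set v : ℕ → ℝ := fun a => ‖PowerSeries.coeff a f‖ * r ^ a with hv
  have hvn : 0 < v n := mul_pos (norm_pos_iff.mpr hn) (pow_pos hr n)
  obtain ⟨B, hB⟩ := (Metric.tendsto_atTop.1 (hf r hr)) (v n) hvn
  have hB' : ∀ a, B ≤ a → v a < v n := by
    intro a ha
    have h2 := hB a ha
    rw [Real.dist_eq, sub_zero, abs_of_nonneg (by positivity)] at h2
    exact h2
  have hnB : n < B := by
    by_contra hc
    exact absurd (hB' n (le_of_not_gt hc)) (lt_irrefl _)
  have hne : (Finset.range B).Nonempty := ⟨n, Finset.mem_range.2 hnB⟩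
  set M := (Finset.range B).sup' hne v with hM
  set S := (Finset.range B).filter (fun a => v a = M) with hS
  obtain ⟨i₀, hi₀mem, hi₀⟩ := Finset.exists_mem_eq_sup' hne v
  have hSne : S.Nonempty := ⟨i₀, Finset.mem_filter.2 ⟨hi₀mem, hi₀.symm⟩⟩
  set i := S.max' hSne with hi
  have hiS : i ∈ S := S.max'_mem hSne
  have hiM : v i = M := (Finset.mem_filter.1 hiS).2
  have hvnM : v n ≤ M := Finset.le_sup' v (Finset.mem_range.2 hnB)
  refine ⟨i, ?_, ?_⟩
  · intro a
    show v a ≤ v i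
    rw [hiM]
    by_cases ha : a < B
    · exact Finset.le_sup' v (Finset.mem_range.2 ha)
    · exact le_of_lt (lt_of_lt_of_le (hB' a (le_of_not_gt ha)) hvnM)
  · intro a hia
    show v a < v i
    rw [hiM]
    by_cases ha : a < B
    · have hle : v a ≤ M := Finset.le_sup' v (Finset.mem_range.2 ha)
      rcases lt_or_eq_of_le hle with hlt | heq
      · exact hlt
      · exact absurd (S.le_max' a (Finset.mem_filter.2 ⟨Finset.mem_range.2 ha, heq⟩))
          (not_le.2 hia)
    · exact lt_of_lt_of_le (hB' a (le_of_not_gt ha)) hvnM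

/-- Key Gauss-norm lemma. -/
lemma aux_key {R : Type*} [NormedCommRing R]
    (hna : IsNonarchimedean (norm : R → ℝ))
    (hmul : ∀ x y : R, ‖x * y‖ = ‖x‖ * ‖y‖)
    {f g : PowerSeries R} (hf : EntireOK f) (hg : EntireOK g)
    {r : ℝ} (hr : 0 < r) {n m : ℕ}
    (hn : PowerSeries.coeff n f ≠ 0) (hm : PowerSeries.coeff m g ≠ 0) :
    ∃ k, ‖PowerSeries.coeff n f‖ * r ^ n * (‖PowerSeries.coeff m g‖ * r ^ m)
      ≤ ‖PowerSeries.coeff k (f * g)‖ * r ^ k := by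
  classical
  obtain ⟨i, hi1, hi2⟩ := aux_exists_max_idx hf hr hn
  obtain ⟨j, hj1, hj2⟩ := aux_exists_max_idx hg hr hm
  have hfn : 0 < ‖PowerSeries.coeff n f‖ * r ^ n :=
    mul_pos (norm_pos_iff.mpr hn) (pow_pos hr n)
  have hgm : 0 < ‖PowerSeries.coeff m g‖ * r ^ m :=
    mul_pos (norm_pos_iff.mpr hm) (pow_pos hr m)
  have hfi : 0 < ‖PowerSeries.coeff i f‖ * r ^ i := lt_of_lt_of_le hfn (hi1 n)
  have hgj : 0 < ‖PowerSeries.coeff j g‖ * r ^ j := lt_of_lt_of_le hgm (hj1 m)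
  have hfi' : 0 < ‖PowerSeries.coeff i f‖ := by
    nlinarith [pow_pos hr i, norm_nonneg (PowerSeries.coeff i f)]
  have hgj' : 0 < ‖PowerSeries.coeff j g‖ := by
    nlinarith [pow_pos hr j, norm_nonneg (PowerSeries.coeff j g)]
  refine ⟨i + j, ?_⟩
  have hcoeff : ‖PowerSeries.coeff i f‖ * ‖PowerSeries.coeff j g‖
      ≤ ‖PowerSeries.coeff (i + j) (f * g)‖ := by
    rw [PowerSeries.coeff_mul]
    have hmem : ((i, j) : ℕ × ℕ) ∈ Finset.HasAntidiagonal.antidiagonal (i + j) :=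
      Finset.HasAntidiagonal.mem_antidiagonal.2 rfl
    rw [← Finset.add_sum_erase _ _ hmem]
    have hrest : ‖∑ p ∈ (Finset.HasAntidiagonal.antidiagonal (i + j)).erase (i, j),
        PowerSeries.coeff p.1 f * PowerSeries.coeff p.2 g‖
        < ‖PowerSeries.coeff i f * PowerSeries.coeff j g‖ := by
      rw [hmul]
      apply aux_norm_sum_lt hna _ _ (mul_pos hfi' hgj')
      intro p hp
      have hps : p.1 + p.2 = i + j := Finset.HasAntidiagonal.mem_antidiagonal.1 (Finset.mem_of_mem_erase hp)
      have hpne : p ≠ (i, j) := Finset.ne_of_mem_erase hp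
      rw [hmul]
      have e1 : ‖PowerSeries.coeff p.1 f‖ * ‖PowerSeries.coeff p.2 g‖ * r ^ (i + j)
          = (‖PowerSeries.coeff p.1 f‖ * r ^ p.1) * (‖PowerSeries.coeff p.2 g‖ * r ^ p.2) := by
        rw [← hps, pow_add]; ring
      have e2 : ‖PowerSeries.coeff i f‖ * ‖PowerSeries.coeff j g‖ * r ^ (i + j)
          = (‖PowerSeries.coeff i f‖ * r ^ i) * (‖PowerSeries.coeff j g‖ * r ^ j) := by
        rw [pow_add]; ring
      have hw : (‖PowerSeries.coeff p.1 f‖ * r ^ p.1) * (‖PowerSeries.coeff p.2 g‖ * r ^ p.2)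
          < (‖PowerSeries.coeff i f‖ * r ^ i) * (‖PowerSeries.coeff j g‖ * r ^ j) := by
        rcases lt_or_ge i p.1 with h1 | h1
        · have ha := hi2 p.1 h1
          have hb := hj1 p.2
          have h0a : (0:ℝ) ≤ ‖PowerSeries.coeff p.1 f‖ * r ^ p.1 := by positivity
          have h0b : (0:ℝ) ≤ ‖PowerSeries.coeff p.2 g‖ * r ^ p.2 := by positivity
          nlinarith
        · have hp1 : p.1 < i := by
            rcases lt_or_eq_of_le h1 with h | h
            · exact h
            · exfalso; apply hpne; have : p.2 = j := by omega
              exact Prod.ext h this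
          have h2 : j < p.2 := by omega
          have ha := hi1 p.1
          have hb := hj2 p.2 h2
          have h0a : (0:ℝ) ≤ ‖PowerSeries.coeff p.1 f‖ * r ^ p.1 := by positivity
          have h0b : (0:ℝ) ≤ ‖PowerSeries.coeff p.2 g‖ * r ^ p.2 := by positivity
          nlinarith
      rw [← e1, ← e2] at hw
      exact lt_of_mul_lt_mul_right hw (pow_nonneg hr.le _)
    calc ‖PowerSeries.coeff i f‖ * ‖PowerSeries.coeff j g‖
        = ‖PowerSeries.coeff i f * PowerSeries.coeff j g‖ := (hmul _ _).symm
      _ ≤ ‖PowerSeries.coeff i f * PowerSeries.coeff j g +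
            ∑ p ∈ (Finset.HasAntidiagonal.antidiagonal (i + j)).erase (i, j),
              PowerSeries.coeff p.1 f * PowerSeries.coeff p.2 g‖ :=
        aux_norm_add_ge hna hrest
  calc ‖PowerSeries.coeff n f‖ * r ^ n * (‖PowerSeries.coeff m g‖ * r ^ m)
      ≤ (‖PowerSeries.coeff i f‖ * r ^ i) * (‖PowerSeries.coeff j g‖ * r ^ j) :=
        mul_le_mul (hi1 n) (hj1 m) hgm.le hfi.le
    _ = ‖PowerSeries.coeff i f‖ * ‖PowerSeries.coeff j g‖ * r ^ (i + j) := by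
        rw [pow_add]; ring
    _ ≤ ‖PowerSeries.coeff (i + j) (f * g)‖ * r ^ (i + j) :=
        mul_le_mul_of_nonneg_right hcoeff (pow_nonneg hr.le _)

/-- Let `R` be an integral domain with a non-Archimedean absolute value. If a nonzero
polynomial `P ∈ R[t]` is divisible in `A_R` by `h ∈ A_R`, then `h` is a polynomial. -/
theorem divisor_of_polynomial_is_polynomial {R : Type*} [NormedCommRing R] [IsDomain R]
    (hna : IsNonarchimedean (norm : R → ℝ))
    (hmul : ∀ x y : R, ‖x * y‖ = ‖x‖ * ‖y‖)
    (P : Polynomial R) (hP : P ≠ 0)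
    (h g : PowerSeries R) (hh : EntireOK h) (hg : EntireOK g)
    (hdvd : polyPS P = h * g) :
    ∃ q : Polynomial R, h = polyPS q := by
  classical
  by_contra hcon
  push_neg at hcon
  -- h has arbitrarily large nonzero coefficients
  have hbig : ∀ d : ℕ, ∃ n, d ≤ n ∧ PowerSeries.coeff n h ≠ 0 := by
    intro d
    by_contra hno
    push_neg at hno
    apply hcon (h.trunc d)
    apply PowerSeries.ext
    intro k
    rw [polyPS, PowerSeries.coeff_mk, PowerSeries.coeff_trunc]
    split
    · rfl
    · exact hno k (le_of_not_gt (by assumption))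
  -- g is nonzero
  have hgne : ∃ m, PowerSeries.coeff m g ≠ 0 := by
    by_contra hg0
    push_neg at hg0
    apply hP
    have hgz : g = 0 := PowerSeries.ext fun k => by simpa using hg0 k
    apply Polynomial.ext
    intro k
    have := congrArg (PowerSeries.coeff k) hdvd
    rw [polyPS, PowerSeries.coeff_mk, hgz, mul_zero, map_zero] at this
    simpa using this
  set N := P.natDegree with hN
  set C := ∑ l ∈ Finset.range (N + 1), ‖P.coeff l‖ with hC
  have hC0 : 0 ≤ C := Finset.sum_nonneg fun l _ => norm_nonneg _
  obtain ⟨n, hnN, hn⟩ := hbig (N + 1)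
  obtain ⟨m, hm⟩ := hgne
  set ε := ‖PowerSeries.coeff n h‖ * ‖PowerSeries.coeff m g‖ with hε
  have hεpos : 0 < ε := mul_pos (norm_pos_iff.mpr hn) (norm_pos_iff.mpr hm)
  set r : ℝ := C / ε + 1 with hrdef
  have hr1 : 1 ≤ r := by
    have : 0 ≤ C / ε := div_nonneg hC0 hεpos.le
    rw [hrdef]; linarith
  have hr0 : 0 < r := lt_of_lt_of_le one_pos hr1
  obtain ⟨k, hk⟩ := aux_key hna hmul hh hg hr0 hn hm
  -- coefficient of h*g is coefficient of P
  have hc : PowerSeries.coeff k (h * g) = P.coeff k := by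
    rw [← hdvd, polyPS, PowerSeries.coeff_mk]
  rw [hc] at hk
  -- bound the RHS
  have hbound : ‖P.coeff k‖ * r ^ k ≤ C * r ^ N := by
    by_cases hkN : k ≤ N
    · have h1 : ‖P.coeff k‖ ≤ C :=
        Finset.single_le_sum (fun l _ => norm_nonneg (P.coeff l))
          (Finset.mem_range.2 (Nat.lt_succ_of_le hkN))
      have h2 : r ^ k ≤ r ^ N := pow_le_pow_right₀ hr1 hkN
      exact mul_le_mul h1 h2 (pow_nonneg hr0.le _) hC0
    · have : P.coeff k = 0 := P.coeff_eq_zero_of_natDegree_lt (lt_of_not_ge hkN)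
      rw [this, norm_zero, zero_mul]
      positivity
  have hεr : ε * r ^ (n + m) ≤ C * r ^ N := by
    calc ε * r ^ (n + m)
        = ‖PowerSeries.coeff n h‖ * r ^ n * (‖PowerSeries.coeff m g‖ * r ^ m) := by
          rw [hε, pow_add]; ring
      _ ≤ ‖P.coeff k‖ * r ^ k := hk
      _ ≤ C * r ^ N := hbound
  have hpow : r ^ (N + 1) ≤ r ^ (n + m) := pow_le_pow_right₀ hr1 (by omega)
  have h3 : ε * r ^ (N + 1) ≤ C * r ^ N :=
    le_trans (mul_le_mul_of_nonneg_left hpow hεpos.le) hεr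
  have h4 : ε * r ≤ C := by
    have h5 : (ε * r) * r ^ N ≤ C * r ^ N := by
      calc (ε * r) * r ^ N = ε * r ^ (N + 1) := by ring
        _ ≤ C * r ^ N := h3
    exact le_of_mul_le_mul_right h5 (pow_pos hr0 N)
  have h6 : ε * (C / ε) = C := by field_simp
  rw [hrdef] at h4
  nlinarith
end
end

section
/- Let R be an integral domain of characteristic p > 2 with a non-Archimedean absolute value, and define polynomials x_n, y_n ∈ 𝔽_p[t] ⊆ A_R by x_n + y_n√(t²-1) = (t+√(t²-1))^n. Then for integers m, n: m divides n in ℤ if and only if y_m divides y_n in A_R. -/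
open Filter Topology

noncomputable section

/-- The Pell polynomials `(x_n, y_n)` for `n ≥ 0`, defined by
`x_n + y_n α = (t + α)^n` with `α² = t² - 1`. -/
def pellRec : ℕ → Polynomial ℤ × Polynomial ℤ
  | 0 => (1, 0)
  | n + 1 =>
      (Polynomial.X * (pellRec n).1 + (Polynomial.X ^ 2 - 1) * (pellRec n).2,
       (pellRec n).1 + Polynomial.X * (pellRec n).2)

/-- `y_n` for `n ∈ ℤ`. -/
def pellY (n : ℤ) : Polynomial ℤ :=
  if 0 ≤ n then (pellRec n.natAbs).2 else -(pellRec n.natAbs).2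

/-- The image of an integer polynomial in `PowerSeries R`; for `char R = p` this
realizes the Pell polynomials as elements of `𝔽_p[t] ⊆ A_R`. -/
def intPolyPS (R : Type*) [CommRing R] (p : Polynomial ℤ) : PowerSeries R :=
  PowerSeries.mk fun n => ((p.coeff n : ℤ) : R)


section
open Polynomial

namespace PellAux

abbrev xP (n : ℕ) : Polynomial ℤ := (pellRec n).1
abbrev yP (n : ℕ) : Polynomial ℤ := (pellRec n).2

lemma xP_succ (n : ℕ) : xP (n+1) = X * xP n + (X^2 - 1) * yP n := rfl
lemma yP_succ (n : ℕ) : yP (n+1) = xP n + X * yP n := rfl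
lemma xP_zero : xP 0 = 1 := rfl
lemma yP_zero : yP 0 = 0 := rfl

lemma pell_add (a b : ℕ) :
    xP (a+b) = xP a * xP b + (X^2 - 1) * (yP a * yP b) ∧
    yP (a+b) = xP a * yP b + yP a * xP b := by
  induction b with
  | zero => simp [xP_zero, yP_zero]
  | succ b ih =>
      obtain ⟨h1, h2⟩ := ih
      constructor
      · rw [show a + (b+1) = (a+b)+1 by ring, xP_succ, h1, h2, xP_succ, yP_succ]; ring
      · rw [show a + (b+1) = (a+b)+1 by ring, yP_succ, h1, h2, xP_succ, yP_succ]; ring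

lemma pell_eq (n : ℕ) : xP n ^ 2 - (X^2 - 1) * yP n ^ 2 = 1 := by
  induction n with
  | zero => simp [xP_zero, yP_zero]
  | succ n ih => rw [xP_succ, yP_succ]; linear_combination ih

lemma y_dvd (m k : ℕ) : yP m ∣ yP (k * m) := by
  induction k with
  | zero => simp [yP_zero]
  | succ k ih =>
      have h := (pell_add (k*m) m).2
      rw [show (k+1)*m = k*m + m by ring, h]
      exact dvd_add (dvd_mul_left _ _) (ih.mul_right _)

lemma deg_bound (n : ℕ) :
    (∀ k, (xP n).coeff (n+1+k) = 0) ∧ (∀ k, (yP n).coeff (n+k) = 0) := by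
  induction n with
  | zero =>
      constructor
      · intro k; simp [xP_zero, coeff_one]
      · intro k; simp [yP_zero]
  | succ n ih =>
      obtain ⟨hx, hy⟩ := ih
      have hXmul : ∀ (P : Polynomial ℤ) (j : ℕ), (X * P).coeff (j+1) = P.coeff j := by
        intro P j; rw [coeff_X_mul]
      have hX2mul : ∀ (P : Polynomial ℤ) (j : ℕ), (X^2 * P).coeff (j+2) = P.coeff j := by
        intro P j; rw [coeff_X_pow_mul]
      constructor
      · intro k
        rw [xP_succ, coeff_add, show n+1+1+k = (n+1+k)+1 by ring, hXmul,
            sub_mul, one_mul, coeff_sub, show (n+1+k)+1 = (n+k)+2 by ring, hX2mul]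
        rw [show n+k+2 = n+(k+2) by ring]
        rw [hx k, hy k, hy (k+2)]; ring
      · intro k
        rw [yP_succ, coeff_add, show n+1+k = (n+k)+1 by ring, coeff_X_mul, hy k]
        have := hx k
        rw [show n+1+k = (n+k)+1 by ring] at this
        simp [this]

end PellAux

namespace PellAux

lemma lead (n : ℕ) :
    (xP (n+1)).coeff (n+1) = 2^n ∧ (yP (n+1)).coeff n = 2^n := by
  induction n with
  | zero =>
      constructor
      · rw [xP_succ, xP_zero, yP_zero]; simp
      · rw [yP_succ, xP_zero, yP_zero]; simp
  | succ n ih =>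
      obtain ⟨hx, hy⟩ := ih
      have hvanish := (deg_bound (n+1)).2 1
      constructor
      · rw [xP_succ, coeff_add, show n+1+1 = (n+1)+1 from rfl, coeff_X_mul, hx,
            sub_mul, one_mul, coeff_sub, show (n+1)+1 = n+2 from rfl, coeff_X_pow_mul, hy]
        rw [show n+1+1 = n+2 from rfl] at hvanish
        rw [hvanish]; ring
      · rw [yP_succ, coeff_add, hx, show n+1 = n+1 from rfl, coeff_X_mul, hy]; ring

section Field

variable {K : Type*} [Field K] {p : ℕ} [CharP K p]

lemma two_ne_zero' (hp2 : 2 < p) : (2 : K) ≠ 0 := by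
  have : ¬ (p ∣ 2) := fun h => absurd (Nat.le_of_dvd (by norm_num) h) (by omega)
  have h2 : ((2 : ℕ) : K) ≠ 0 := fun h => this ((CharP.cast_eq_zero_iff K p 2).1 h)
  simpa using h2

/-- the map `ℤ[X] → K[X]` -/
def ψ (K : Type*) [CommRing K] : Polynomial ℤ →+* Polynomial K :=
  Polynomial.mapRingHom (Int.castRingHom K)

lemma psi_y_coeff_lead (n : ℕ) : (ψ K (yP (n+1))).coeff n = (2 : K)^n := by
  have := (lead n).2
  simp [ψ, Polynomial.coeff_map, this]

lemma psi_y_ne_zero (hp2 : 2 < p) (n : ℕ) : ψ K (yP (n+1)) ≠ 0 := by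
  intro h
  have h1 := psi_y_coeff_lead (K := K) n
  rw [h] at h1
  exact pow_ne_zero n (two_ne_zero' (K := K) hp2) (by simpa using h1.symm : (2:K)^n = 0)

lemma psi_y_natDegree (hp2 : 2 < p) (n : ℕ) : (ψ K (yP (n+1))).natDegree = n := by
  apply le_antisymm
  · rw [natDegree_le_iff_coeff_eq_zero]
    intro N hN
    have := (deg_bound (n+1)).2 (N - (n+1))
    rw [show n+1+(N-(n+1)) = N by omega] at this
    simp [ψ, Polynomial.coeff_map, this]
  · exact le_natDegree_of_ne_zero (by
      rw [psi_y_coeff_lead]; exact pow_ne_zero n (two_ne_zero' (K := K) hp2))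

lemma psi_coprime (m : ℕ) : IsCoprime (ψ K (yP m)) (ψ K (xP m)) := by
  refine ⟨-((X^2 - 1) * ψ K (yP m)), ψ K (xP m), ?_⟩
  have h := pell_eq m
  have h2 : ψ K (xP m) ^ 2 - (X^2 - 1) * ψ K (yP m) ^ 2 = 1 := by
    have := congrArg (ψ K) h
    simpa [ψ, Polynomial.map_pow, Polynomial.map_sub, Polynomial.map_mul,
      Polynomial.map_one] using this
  linear_combination h2

lemma dvd_of_psi_y_dvd (hp2 : 2 < p) : ∀ (n m : ℕ), 1 ≤ m → ψ K (yP m) ∣ ψ K (yP n) → m ∣ n := by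
  intro n
  induction n using Nat.strong_induction_on with
  | _ n ih =>
      intro m hm h
      rcases Nat.eq_zero_or_pos n with rfl | hn
      · exact dvd_zero m
      rcases lt_or_ge n m with hlt | hle
      · exfalso
        obtain ⟨n', rfl⟩ : ∃ n', n = n' + 1 := ⟨n - 1, by omega⟩
        obtain ⟨m', rfl⟩ : ∃ m', m = m' + 1 := ⟨m - 1, by omega⟩
        have hd := Polynomial.natDegree_le_of_dvd h (psi_y_ne_zero hp2 n')
        rw [psi_y_natDegree hp2, psi_y_natDegree hp2] at hd
        omega
      · have h2 : yP n = xP (n - m) * yP m + yP (n - m) * xP m := by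
          have := (pell_add (n - m) m).2
          rwa [Nat.sub_add_cancel hle] at this
        have h3 : ψ K (yP n) = ψ K (xP (n-m)) * ψ K (yP m) + ψ K (yP (n-m)) * ψ K (xP m) := by
          rw [← map_mul, ← map_mul, ← map_add, ← h2]
        have h4 : ψ K (yP m) ∣ ψ K (yP (n-m)) * ψ K (xP m) := by
          have : ψ K (yP (n-m)) * ψ K (xP m) =
              ψ K (yP n) - ψ K (xP (n-m)) * ψ K (yP m) := by rw [h3]; ring
          rw [this]
          exact dvd_sub h (dvd_mul_left _ _)
        have h5 : ψ K (yP m) ∣ ψ K (yP (n-m)) := (psi_coprime m).dvd_of_dvd_mul_right h4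
        have h6 : m ∣ n - m := ih (n - m) (by omega) m hm h5
        have : m ∣ (n - m) + m := dvd_add h6 dvd_rfl
        rwa [Nat.sub_add_cancel hle] at this

end Field
end PellAux

namespace PellAux

section Analytic

variable {R : Type*} [NormedCommRing R]

lemma na_sum (hna : IsNonarchimedean (norm : R → ℝ)) (f : ℕ → R) :
    ∀ d, 0 < d → ∃ i, i < d ∧ ‖∑ j ∈ Finset.range d, f j‖ ≤ ‖f i‖ := by
  intro d
  induction d with
  | zero => omega
  | succ d ih =>
      intro _
      rcases Nat.eq_zero_or_pos d with rfl | hd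
      · exact ⟨0, by norm_num, by simp⟩
      · obtain ⟨i, hi, hle⟩ := ih hd
        rw [Finset.sum_range_succ]
        have h := hna (∑ j ∈ Finset.range d, f j) (f d)
        rcases le_max_iff.1 h with h' | h'
        · exact ⟨i, by omega, le_trans h' hle⟩
        · exact ⟨d, by omega, h'⟩

lemma rec_of_mul_eq {A B : Polynomial R} {G : PowerSeries R}
    (h : (A : PowerSeries R) * G = (B : PowerSeries R)) {N : ℕ}
    (hN : B.natDegree < N) (hdN : A.natDegree ≤ N) :
    A.coeff A.natDegree * PowerSeries.coeff (N - A.natDegree) G =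
      -∑ i ∈ Finset.range A.natDegree, A.coeff i * PowerSeries.coeff (N - i) G := by
  set d := A.natDegree with hd
  have h0 : PowerSeries.coeff N ((A : PowerSeries R) * G) = 0 := by
    rw [h, Polynomial.coeff_coe]
    exact Polynomial.coeff_eq_zero_of_natDegree_lt hN
  rw [PowerSeries.coeff_mul, Finset.Nat.sum_antidiagonal_eq_sum_range_succ_mk] at h0
  have h1 : ∑ k ∈ Finset.range (N+1),
      (PowerSeries.coeff k) (A : PowerSeries R) * PowerSeries.coeff (N - k) G =
      ∑ k ∈ Finset.range (d+1), A.coeff k * PowerSeries.coeff (N - k) G := by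
    rw [← Finset.sum_subset (Finset.range_subset_range.2 (by omega : d+1 ≤ N+1))]
    · exact Finset.sum_congr rfl (fun k _ => by rw [Polynomial.coeff_coe])
    · intro k hk hk2
      rw [Polynomial.coeff_coe,
        Polynomial.coeff_eq_zero_of_natDegree_lt (by simp at hk2; omega), zero_mul]
  rw [h1, Finset.sum_range_succ] at h0
  linear_combination h0

lemma coeff_zero_of_entire [IsDomain R]
    (hna : IsNonarchimedean (norm : R → ℝ))
    (hmul : ∀ x y : R, ‖x * y‖ = ‖x‖ * ‖y‖)
    {A B : Polynomial R} {G : PowerSeries R} (hG : EntireOK G) (hA : A ≠ 0)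
    (h : (A : PowerSeries R) * G = (B : PowerSeries R)) :
    ∀ j, B.natDegree < j → PowerSeries.coeff j G = 0 := by
  set d := A.natDegree with hdd
  set e := B.natDegree with hee
  set g : ℕ → R := fun j => PowerSeries.coeff j G with hg
  have had : A.coeff d ≠ 0 := by
    rw [hdd, Polynomial.coeff_natDegree]; exact Polynomial.leadingCoeff_ne_zero.2 hA
  have hrec : ∀ N, e < N → d ≤ N →
      A.coeff d * g (N - d) = -∑ i ∈ Finset.range d, A.coeff i * g (N - i) :=
    fun N h1 h2 => rec_of_mul_eq h h1 h2
  rcases Nat.eq_zero_or_pos d with hd0 | hd1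
  · -- degree 0 case
    intro j hj
    have := hrec j hj (by omega)
    rw [hd0] at this
    simp only [Finset.range_zero, Finset.sum_empty, neg_zero, Nat.sub_zero] at this
    rcases mul_eq_zero.1 this with h' | h'
    · rw [hd0] at had; exact absurd h' had
    · exact h'
  -- main case : d ≥ 1
  set Ca : ℝ := (∑ i ∈ Finset.range d, ‖A.coeff i‖) + 1 with hCa
  have hCa1 : 1 ≤ Ca := by
    have : (0:ℝ) ≤ ∑ i ∈ Finset.range d, ‖A.coeff i‖ :=
      Finset.sum_nonneg fun i _ => norm_nonneg _
    simp [hCa]; linarith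
  have hai : ∀ i ∈ Finset.range d, ‖A.coeff i‖ ≤ Ca := by
    intro i hi
    have := Finset.single_le_sum (f := fun i => ‖A.coeff i‖)
      (fun i _ => norm_nonneg _) hi
    simp [hCa]; linarith
  have hadpos : 0 < ‖A.coeff d‖ := norm_pos_iff.2 had
  set C₀ : ℝ := max (Ca / ‖A.coeff d‖) 1 with hC₀
  have hC₀1 : 1 ≤ C₀ := le_max_right _ _
  have hC₀0 : 0 ≤ C₀ := by linarith
  have step : ∀ j, e < j + d → ∃ i, 1 ≤ i ∧ i ≤ d ∧ ‖g j‖ ≤ C₀ * ‖g (j + i)‖ := by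
    intro j hj
    have hr := hrec (j + d) hj (by omega)
    rw [show j + d - d = j by omega] at hr
    obtain ⟨i0, hi0, hle⟩ := na_sum hna (fun i => A.coeff i * g (j + d - i)) d hd1
    have h2 : ‖A.coeff d‖ * ‖g j‖ ≤ ‖A.coeff i0‖ * ‖g (j + d - i0)‖ := by
      rw [← hmul, ← hmul, hr, norm_neg]
      exact hle
    have h3 : ‖A.coeff d‖ * ‖g j‖ ≤ Ca * ‖g (j + (d - i0))‖ := by
      rw [show j + (d - i0) = j + d - i0 by omega]
      exact le_trans h2 (mul_le_mul_of_nonneg_right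
        (hai i0 (Finset.mem_range.2 hi0)) (norm_nonneg _))
    refine ⟨d - i0, by omega, by omega, ?_⟩
    have h4 : ‖g j‖ ≤ (Ca / ‖A.coeff d‖) * ‖g (j + (d - i0))‖ := by
      rw [div_mul_eq_mul_div, le_div_iff₀ hadpos]
      linarith [h3]
    exact le_trans h4 (mul_le_mul_of_nonneg_right (le_max_left _ _) (norm_nonneg _))
  have chain : ∀ k j, e < j + d → ∃ j', j + k ≤ j' ∧ ‖g j‖ ≤ C₀ ^ k * ‖g j'‖ := by
    intro k
    induction k with
    | zero => intro j hj; exact ⟨j, by omega, by simp⟩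
    | succ k ih =>
        intro j hj
        obtain ⟨i, hi1, hid, hstep⟩ := step j hj
        obtain ⟨j', hj'1, hj'2⟩ := ih (j + i) (by omega)
        refine ⟨j', by omega, ?_⟩
        calc ‖g j‖ ≤ C₀ * ‖g (j + i)‖ := hstep
          _ ≤ C₀ * (C₀ ^ k * ‖g j'‖) := mul_le_mul_of_nonneg_left hj'2 hC₀0
          _ = C₀ ^ (k+1) * ‖g j'‖ := by ring
  intro j hj
  by_contra hgj
  have hε : 0 < ‖g j‖ := norm_pos_iff.2 hgj
  set r : ℝ := C₀ + 1 with hrdef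
  have hr0 : (0:ℝ) < r := by linarith
  have hr1 : (1:ℝ) ≤ r := by linarith
  have hCr : C₀ ≤ r := by linarith
  have hev : ∀ᶠ n in atTop, ‖g n‖ * r ^ n < ‖g j‖ * r ^ j := by
    have hpos : (0:ℝ) < ‖g j‖ * r ^ j := mul_pos hε (pow_pos hr0 _)
    exact (hG r hr0).eventually_lt_const hpos
  obtain ⟨N₀, hN₀⟩ := eventually_atTop.1 hev
  obtain ⟨j', hj'1, hj'2⟩ := chain N₀ j (by omega)
  have hlt := hN₀ j' (by omega)
  have hge : ‖g j‖ * r ^ j ≤ ‖g j'‖ * r ^ j' := by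
    calc ‖g j‖ * r ^ j ≤ (C₀ ^ N₀ * ‖g j'‖) * r ^ j :=
          mul_le_mul_of_nonneg_right hj'2 (pow_nonneg (le_of_lt hr0) _)
      _ ≤ (r ^ N₀ * ‖g j'‖) * r ^ j := by
          have : C₀ ^ N₀ ≤ r ^ N₀ := pow_le_pow_left₀ hC₀0 hCr N₀
          exact mul_le_mul_of_nonneg_right
            (mul_le_mul_of_nonneg_right this (norm_nonneg _))
            (pow_nonneg (le_of_lt hr0) _)
      _ = ‖g j'‖ * r ^ (j + N₀) := by rw [pow_add]; ring
      _ ≤ ‖g j'‖ * r ^ j' :=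
          mul_le_mul_of_nonneg_left (pow_le_pow_right₀ hr1 hj'1) (norm_nonneg _)
  linarith

end Analytic
end PellAux

namespace PellAux

section Glue

variable {R : Type*} [NormedCommRing R]

lemma intPolyPS_eq (P : Polynomial ℤ) :
    intPolyPS R P = ((P.map (Int.castRingHom R) : Polynomial R) : PowerSeries R) := by
  ext n
  simp [intPolyPS, Polynomial.coeff_coe, Polynomial.coeff_map]

lemma intPolyPS_mul (P Q : Polynomial ℤ) :
    intPolyPS R (P * Q) = intPolyPS R P * intPolyPS R Q := by
  rw [intPolyPS_eq, intPolyPS_eq, intPolyPS_eq, Polynomial.map_mul, Polynomial.coe_mul]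

lemma entire_poly (Q : Polynomial R) : EntireOK (Q : PowerSeries R) := by
  intro r hr
  have h : (fun n : ℕ => ‖PowerSeries.coeff n (Q : PowerSeries R)‖ * r ^ n)
      =ᶠ[atTop] (fun _ => (0:ℝ)) := by
    filter_upwards [eventually_gt_atTop Q.natDegree] with n hn
    rw [Polynomial.coeff_coe, Polynomial.coeff_eq_zero_of_natDegree_lt hn, norm_zero, zero_mul]
  rw [Filter.tendsto_congr' h]
  exact tendsto_const_nhds

lemma coe_trunc_eq {G : PowerSeries R} {N : ℕ}
    (h : ∀ j, N < j → PowerSeries.coeff j G = 0) :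
    ((PowerSeries.trunc (N+1) G : Polynomial R) : PowerSeries R) = G := by
  ext k
  rw [Polynomial.coeff_coe, PowerSeries.coeff_trunc]
  split_ifs with hk
  · rfl
  · exact (h k (by omega)).symm

lemma map_int_cast_comp (K : Type*) [CommRing K] [Algebra R K] (P : Polynomial ℤ) :
    (P.map (Int.castRingHom R)).map (algebraMap R K) = ψ K P := by
  rw [Polynomial.map_map]
  simp only [ψ, Polynomial.coe_mapRingHom]
  congr 1
  exact RingHom.ext_int _ _

end Glue
end PellAux

end

/-- Let `R` be an integral domain of characteristic `p > 2` with a non-Archimedean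
absolute value. For integers `m, n`: `m ∣ n` in `ℤ` if and only if `y_m ∣ y_n`
in `A_R`. -/
theorem pellY_dvd_iff {R : Type*} [NormedCommRing R] [IsDomain R]
    (p : ℕ) (hp : p.Prime) (hp2 : 2 < p) [CharP R p]
    (hna : IsNonarchimedean (norm : R → ℝ))
    (hmul : ∀ x y : R, ‖x * y‖ = ‖x‖ * ‖y‖) :
    ∀ m n : ℤ, m ∣ n ↔
      ∃ g : PowerSeries R, EntireOK g ∧
        intPolyPS R (pellY n) = intPolyPS R (pellY m) * g := by
  classical
  intro m n
  set K := FractionRing R with hK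
  haveI : CharP K p := charP_of_injective_algebraMap (IsFractionRing.injective R K) p
  constructor
  · intro h
    obtain ⟨s, hs⟩ : ∃ s : Polynomial ℤ, pellY n = pellY m * s := by
      obtain ⟨c, hc⟩ := Int.natAbs_dvd_natAbs.2 h
      have hy : PellAux.yP m.natAbs ∣ PellAux.yP n.natAbs := by
        rw [hc, mul_comm]; exact PellAux.y_dvd _ _
      obtain ⟨q, hq⟩ := hy
      refine ⟨(if 0 ≤ m then 1 else -1) * (if 0 ≤ n then 1 else -1) * q, ?_⟩
      have hq' : (pellRec n.natAbs).2 = (pellRec m.natAbs).2 * q := hq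
      rw [pellY, pellY]
      split_ifs <;> rw [hq'] <;> ring
    refine ⟨intPolyPS R s, ?_, ?_⟩
    · rw [PellAux.intPolyPS_eq]; exact PellAux.entire_poly _
    · rw [hs, PellAux.intPolyPS_mul]
  · rintro ⟨g, hg, heq⟩
    rw [PellAux.intPolyPS_eq, PellAux.intPolyPS_eq] at heq
    by_cases hm : m = 0
    · subst hm
      have h0 : pellY 0 = 0 := by simp [pellY]; rfl
      rw [h0] at heq
      rw [Polynomial.map_zero, Polynomial.coe_zero, zero_mul] at heq
      have hPn : ((pellY n).map (Int.castRingHom R)) = 0 := by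
        refine Polynomial.coe_inj.1 ?_
        rw [heq, Polynomial.coe_zero]
      rcases eq_or_ne n 0 with rfl | hn
      · exact dvd_refl 0
      · exfalso
        have hKz : PellAux.ψ K (pellY n) = 0 := by
          have h2 := congrArg (Polynomial.map (algebraMap R K)) hPn
          rwa [PellAux.map_int_cast_comp, Polynomial.map_zero] at h2
        obtain ⟨n', hn'⟩ : ∃ n', n.natAbs = n' + 1 :=
          ⟨n.natAbs - 1, by have := Int.natAbs_pos.2 hn; omega⟩
        have hne := PellAux.psi_y_ne_zero (K := K) hp2 n'
        have hsn : pellY n = PellAux.yP (n'+1) ∨ pellY n = -PellAux.yP (n'+1) := by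
          rw [pellY, hn']
          split_ifs
          · exact Or.inl rfl
          · exact Or.inr rfl
        rcases hsn with h' | h' <;> rw [h'] at hKz
        · exact hne hKz
        · rw [map_neg, neg_eq_zero] at hKz; exact hne hKz
    · obtain ⟨m', hm'⟩ : ∃ m', m.natAbs = m' + 1 :=
        ⟨m.natAbs - 1, by have := Int.natAbs_pos.2 hm; omega⟩
      set A : Polynomial R := (pellY m).map (Int.castRingHom R) with hA_def
      set B : Polynomial R := (pellY n).map (Int.castRingHom R) with hB_def
      have hsign_m : pellY m = PellAux.yP m.natAbs ∨ pellY m = -PellAux.yP m.natAbs := by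
        rw [pellY]; split_ifs
        · exact Or.inl rfl
        · exact Or.inr rfl
      have hsign_n : pellY n = PellAux.yP n.natAbs ∨ pellY n = -PellAux.yP n.natAbs := by
        rw [pellY]; split_ifs
        · exact Or.inl rfl
        · exact Or.inr rfl
      have hAK : A.map (algebraMap R K) = PellAux.ψ K (pellY m) :=
        PellAux.map_int_cast_comp K _
      have hA : A ≠ 0 := by
        intro h0
        have hz : PellAux.ψ K (pellY m) = 0 := by rw [← hAK, h0, Polynomial.map_zero]
        rcases hsign_m with h' | h' <;> rw [h', hm'] at hz
        · exact PellAux.psi_y_ne_zero hp2 m' hz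
        · rw [map_neg, neg_eq_zero] at hz; exact PellAux.psi_y_ne_zero hp2 m' hz
      have hvan := PellAux.coeff_zero_of_entire hna hmul hg hA heq.symm
      have htr := PellAux.coe_trunc_eq hvan
      have hpoly : B = A * (PowerSeries.trunc (B.natDegree + 1) g) := by
        refine Polynomial.coe_inj.1 ?_
        rw [Polynomial.coe_mul, htr, heq]
      have hKdvd : PellAux.ψ K (pellY m) ∣ PellAux.ψ K (pellY n) := by
        refine ⟨(PowerSeries.trunc (B.natDegree + 1) g).map (algebraMap R K), ?_⟩
        have h2 := congrArg (Polynomial.map (algebraMap R K)) hpoly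
        rwa [Polynomial.map_mul, PellAux.map_int_cast_comp, PellAux.map_int_cast_comp] at h2
      have hyd : PellAux.ψ K (PellAux.yP m.natAbs) ∣ PellAux.ψ K (PellAux.yP n.natAbs) := by
        rcases hsign_m with h1 | h1 <;> rcases hsign_n with h2 | h2 <;>
          rw [h1, h2] at hKdvd <;>
          simpa only [map_neg, dvd_neg, neg_dvd] using hKdvd
      have hfin := PellAux.dvd_of_psi_y_dvd hp2 n.natAbs m.natAbs (by omega) hyd
      exact Int.natAbs_dvd_natAbs.1 hfin
end
end

section
/- Let p > 2 be prime and let x_m ∈ 𝔽_p[t] be the Pell polynomials defined by x_m + y_m√(t²-1) = (t+√(t²-1))^m. Then x_m(t+1) = x_m(t) + 1 if and only if m = ±p^r for some r ≥ 0. -/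
noncomputable section

/-- `x_n` for `n ∈ ℤ` (note `x_{-n} = x_n`). -/
def pellX (n : ℤ) : Polynomial ℤ := (pellRec n.natAbs).1

/-- Reduction of an integer polynomial modulo `p`, realizing the Pell polynomials
in `𝔽_p[t]`. -/
def redp (p : ℕ) (q : Polynomial ℤ) : Polynomial (ZMod p) :=
  q.map (Int.castRingHom (ZMod p))

open Polynomial Polynomial.Chebyshev

/-- `pellRec` agrees with the Chebyshev polynomials. -/
theorem pellRec_eq_chebyshev : ∀ n : ℕ,
    (pellRec n).1 = T ℤ n ∧ (pellRec n).2 = U ℤ ((n : ℤ) - 1)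
  | 0 => by
    constructor
    · simp [pellRec, T_zero]
    · simp [pellRec, U_neg_one]
  | n + 1 => by
    obtain ⟨h1, h2⟩ := pellRec_eq_chebyshev n
    constructor
    · show Polynomial.X * (pellRec n).1 + (Polynomial.X ^ 2 - 1) * (pellRec n).2 = _
      rw [h1, h2]
      have := T_eq_X_mul_T_sub_pol_U ℤ ((n : ℤ) - 1)
      push_cast
      rw [show (n : ℤ) + 1 = ((n : ℤ) - 1) + 2 by ring]
      rw [this]
      ring_nf
    · show (pellRec n).1 + Polynomial.X * (pellRec n).2 = _
      rw [h1, h2]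
      have := U_eq_X_mul_U_add_T ℤ ((n : ℤ) - 1)
      push_cast
      rw [show (n : ℤ) + 1 - 1 = ((n : ℤ) - 1) + 1 by ring, this]
      ring_nf

theorem T_natDegree_le_and_coeff (F : Type*) [Field F] :
    ∀ n : ℕ, (T F n).natDegree ≤ n ∧ (T F n).coeff n = 2 ^ (n - 1)
  | 0 => by constructor <;> simp [T_zero]
  | 1 => by constructor <;> simp [T_one]
  | n + 2 => by
    obtain ⟨hd1, hc1⟩ := T_natDegree_le_and_coeff F n
    obtain ⟨hd2, hc2⟩ := T_natDegree_le_and_coeff F (n + 1)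
    have hT : T F ((n : ℤ) + 2) = 2 * X * T F ((n : ℤ) + 1) - T F n := T_add_two F n
    have hcast : ((n + 2 : ℕ) : ℤ) = (n : ℤ) + 2 := by push_cast; ring
    have hcast1 : ((n + 1 : ℕ) : ℤ) = (n : ℤ) + 1 := by push_cast; ring
    rw [hcast, hT]
    have h2X : (2 * X * T F ((n : ℤ) + 1)) = Polynomial.C 2 * (X * T F ((n : ℤ) + 1)) := by
      rw [map_ofNat]; ring
    constructor
    · refine (natDegree_sub_le _ _).trans (max_le ?_ ?_)
      · rw [h2X]
        refine (natDegree_mul_le).trans ?_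
        have : (X * T F ((n : ℤ) + 1)).natDegree ≤ 1 + (n + 1) := by
          refine (natDegree_mul_le).trans ?_
          rw [← hcast1]
          exact add_le_add natDegree_X_le hd2
        simpa [natDegree_C] using this.trans (by omega)
      · exact hd1.trans (by omega)
    · rw [coeff_sub, h2X, coeff_C_mul, show n + 2 = (n + 1) + 1 from rfl, coeff_X_mul]
      rw [← hcast1] at *
      rw [hc2]
      have : (T F (n : ℤ)).coeff (n + 1 + 1) = 0 :=
        coeff_eq_zero_of_natDegree_lt (lt_of_le_of_lt hd1 (by omega))
      rw [this, sub_zero]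
      rw [show (n + 1) - 1 = n from rfl, show (n + 2) - 1 = n + 1 from rfl, pow_succ]
      ring

/-- Coefficient of `f.comp (X+1)` below the top degree. -/
theorem coeff_comp_X_add_one {F : Type*} [CommRing F] (f : F[X]) (k : ℕ)
    (hk : f.natDegree ≤ k + 1) :
    (f.comp (X + 1)).coeff k = f.coeff k + (k + 1) * f.coeff (k + 1) := by
  have h1 : f.comp (X + 1) = Polynomial.taylor 1 f := by
    rw [taylor_apply, Polynomial.C_1]
  rw [h1, taylor_coeff]
  set g := Polynomial.hasseDeriv k f with hg
  have hgd : g.natDegree ≤ 1 := (Polynomial.natDegree_hasseDeriv_le f k).trans (by omega)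
  have : g.eval 1 = g.coeff 0 + g.coeff 1 := by
    rw [Polynomial.eval_eq_sum_range' (show g.natDegree < 2 by omega)]
    simp [Finset.sum_range_succ]
  rw [this, hg, Polynomial.hasseDeriv_coeff, Polynomial.hasseDeriv_coeff]
  simp only [zero_add, Nat.choose_self, Nat.cast_one, one_mul]
  rw [show 1 + k = k + 1 by ring, Nat.choose_succ_self_right]
  push_cast
  ring

theorem T_p_eq (p : ℕ) (hp : p.Prime) (hp2 : 2 < p) :
    T (ZMod p) p = X ^ p := by
  haveI : Fact p.Prime := ⟨hp⟩
  have h2 : (2 : ZMod p) ≠ 0 := by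
    intro hc
    have h22 : ((2 : ℕ) : ZMod p) = 0 := by push_cast; exact hc
    rw [ZMod.natCast_eq_zero_iff] at h22
    have := Nat.le_of_dvd (by norm_num) h22
    omega
  haveI : Invertible (2 : ZMod p) := invertibleOfNonzero h2
  have h := Polynomial.chebyshev_T_eq_dickson_one_one (ZMod p) p
  rw [Polynomial.dickson_one_one_zmod_p p] at h
  rw [h, pow_comp, X_comp]
  have h2p : (2 * X : (ZMod p)[X]) ^ p = Polynomial.C 2 * X ^ p := by
    rw [mul_pow, show ((2 : (ZMod p)[X])) = Polynomial.C (2 : ZMod p) from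
      (map_ofNat Polynomial.C 2).symm, ← Polynomial.C_pow, ZMod.pow_card]
  rw [h2p, ← mul_assoc, ← Polynomial.C_mul, invOf_mul_self, Polynomial.C_1, one_mul]

theorem T_p_pow_eq (p : ℕ) (hp : p.Prime) (hp2 : 2 < p) (r : ℕ) :
    T (ZMod p) ((p : ℤ) ^ r) = X ^ p ^ r := by
  induction r with
  | zero => simp [T_one]
  | succ r ih =>
    have : ((p : ℤ) ^ (r + 1)) = (p : ℤ) ^ r * p := by ring
    rw [this, T_mul, ih, pow_comp, T_p_eq p hp hp2, X_comp, ← pow_mul, ← pow_succ']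

/-- Let `p > 2` be prime. In `𝔽_p[t]`, `x_m(t+1) = x_m(t) + 1` if and only if
`m = ± p^r` for some `r ≥ 0`. -/
theorem pellX_shift_iff (p : ℕ) (hp : p.Prime) (hp2 : 2 < p) (m : ℤ) :
    (redp p (pellX m)).comp (Polynomial.X + 1) = redp p (pellX m) + 1 ↔
      ∃ r : ℕ, m = (p : ℤ) ^ r ∨ m = -((p : ℤ) ^ r) := by
  haveI : Fact p.Prime := ⟨hp⟩
  haveI : CharP (ZMod p) p := ZMod.charP p
  set n := m.natAbs with hn
  have hred : redp p (pellX m) = T (ZMod p) n := by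
    rw [redp, pellX, (pellRec_eq_chebyshev n).1, Polynomial.Chebyshev.map_T]
  have h2 : (2 : ZMod p) ≠ 0 := by
    intro hc
    have : ((2 : ℕ) : ZMod p) = 0 := by push_cast; exact hc
    rw [ZMod.natCast_eq_zero_iff] at this
    have := Nat.le_of_dvd (by norm_num) this
    omega
  rw [hred]
  have hRHS : (∃ r : ℕ, m = (p : ℤ) ^ r ∨ m = -((p : ℤ) ^ r)) ↔ ∃ r : ℕ, n = p ^ r := by
    constructor
    · rintro ⟨r, h | h⟩ <;> exact ⟨r, by rw [hn, h]; simp [Int.natAbs_pow]⟩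
    · rintro ⟨r, h⟩
      refine ⟨r, ?_⟩
      have := Int.natAbs_eq_iff.mp h
      push_cast at this
      exact this
  rw [hRHS]
  constructor
  · intro heq
    -- forward direction
    rcases Nat.eq_zero_or_pos n with hn0 | hn1
    · exfalso
      rw [hn0] at heq
      simp only [Int.natCast_zero, T_zero, one_comp] at heq
      have h3 : (1 : ZMod p) = 1 + 1 := by
        have := congrArg (fun q => Polynomial.coeff q 0) heq
        simpa using this
      exact h2 (by linear_combination (-2 : ZMod p) * h3)
    · -- write n = p^r * s with p ∤ s
      set r := n.factorization p with hr
      set s := n / p ^ r with hs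
      have hfact : p ^ r * s = n := Nat.ordProj_mul_ordCompl_eq_self n p
      have hps : ¬ p ∣ s := Nat.not_dvd_ordCompl hp (by omega)
      have hs1 : 1 ≤ s := Nat.pos_of_ne_zero (by
        intro h0; rw [h0, Nat.mul_zero] at hfact; omega)
      -- T n = (T s)^(p^r)
      have hTn : T (ZMod p) n = (T (ZMod p) s) ^ p ^ r := by
        have : ((n : ℤ)) = (p : ℤ) ^ r * s := by
          rw [← hfact]; push_cast; ring
        rw [this, T_mul, T_p_pow_eq p hp hp2, pow_comp, X_comp]
      rw [hTn] at heq
      rw [pow_comp] at heq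
      have hfrob : (T (ZMod p) s).comp (X + 1) = T (ZMod p) s + 1 := by
        have h1 : ((T (ZMod p) s).comp (X + 1)) ^ p ^ r
            = (T (ZMod p) s + 1) ^ p ^ r := by
          rw [heq, add_pow_char_pow, one_pow]
        have h0 : ((T (ZMod p) s).comp (X + 1) - (T (ZMod p) s + 1)) ^ p ^ r = 0 := by
          rw [sub_pow_char_pow, h1, sub_self]
        have hz := (pow_eq_zero_iff ((pow_pos hp.pos r).ne')).mp h0
        exact sub_eq_zero.mp hz
      -- now show s = 1
      have hs_eq : s = 1 := by
        by_contra hsne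
        have hs2 : 2 ≤ s := by omega
        obtain ⟨hdle, hcoeff⟩ := T_natDegree_le_and_coeff (ZMod p) s
        have hk : (T (ZMod p) s).natDegree ≤ (s - 1) + 1 := by omega
        have hc := coeff_comp_X_add_one (T (ZMod p) s) (s - 1) hk
        rw [hfrob] at hc
        rw [show (s - 1) + 1 = s by omega] at hc
        rw [Polynomial.coeff_add, Polynomial.coeff_one] at hc
        rw [if_neg (by omega : ¬ s - 1 = 0)] at hc
        rw [hcoeff] at hc
        have hcast : ((s - 1 : ℕ) : ZMod p) + 1 = (s : ZMod p) := by
          rw [Nat.cast_sub (by omega : 1 ≤ s)]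
          push_cast
          ring
        rw [hcast] at hc
        have : ((s : ZMod p)) * 2 ^ (s - 1) = 0 := by linear_combination -hc
        have h2pow : (2 : ZMod p) ^ (s - 1) ≠ 0 := pow_ne_zero _ h2
        have hsz : (s : ZMod p) = 0 := by
          rcases mul_eq_zero.mp this with h | h
          · exact h
          · exact absurd h h2pow
        rw [ZMod.natCast_eq_zero_iff] at hsz
        exact hps hsz
      exact ⟨r, by rw [← hfact, hs_eq, mul_one]⟩
  · rintro ⟨r, hnr⟩
    rw [hnr]
    push_cast
    rw [T_p_pow_eq p hp hp2, pow_comp, X_comp, add_pow_char_pow]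
    simp
end
end

section
/- Let R be an integral domain of positive characteristic p with a non-Archimedean absolute value, and let A_R be the ring of entire power series over R. For f ∈ 𝔽_p[t] ⊆ A_R, the following are equivalent: (i) f ≠ 0; (ii) there exist a, b, c ∈ A_R such that (ta+1)·((t-1)b+1) = f·c. -/
open Filter Topology

noncomputable section

/-- The image of a polynomial over `𝔽_p` in `PowerSeries R`, for `R` of
characteristic `p` (embedding `𝔽_p[t] ⊆ A_R` via the prime subring). -/
def fpPolyPS (p : ℕ) (R : Type*) [CommRing R] [CharP R p] (f : Polynomial (ZMod p)) :
    PowerSeries R :=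
  PowerSeries.mk fun n => ZMod.castHom (dvd_refl p) R (f.coeff n)

/-- Any polynomial, viewed as a power series, is entire. -/
lemma entireOK_poly {R : Type*} [NormedCommRing R] (q : Polynomial R) :
    EntireOK (q : PowerSeries R) := by
  intro r hr
  apply Tendsto.congr' _ (tendsto_const_nhds (x := (0 : ℝ)))
  filter_upwards [eventually_gt_atTop q.natDegree] with n hn
  rw [Polynomial.coeff_coe, Polynomial.coeff_eq_zero_of_natDegree_lt hn, norm_zero, zero_mul]

/-- Pigeonhole: any nonzero polynomial over `𝔽_p` divides `X^i * (X^d - 1)`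
for some `i` and some `d ≥ 1`. -/
lemma dvd_X_pow_mul_X_pow_sub_one {p : ℕ} (hp : p.Prime) (f : Polynomial (ZMod p))
    (hf : f ≠ 0) :
    ∃ i d : ℕ, 0 < d ∧
      f ∣ Polynomial.X ^ i * (Polynomial.X ^ d - 1) := by
  haveI : Fact p.Prime := ⟨hp⟩
  haveI : NeZero p := ⟨hp.ne_zero⟩
  obtain ⟨m, hfm, hm⟩ : ∃ m : Polynomial (ZMod p), f ∣ m ∧ m.Monic :=
    ⟨f * Polynomial.C f.leadingCoeff⁻¹, ⟨_, rfl⟩, Polynomial.monic_mul_leadingCoeff_inv hf⟩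
  -- pigeonhole on remainders of powers of X modulo m
  obtain ⟨i, j, hij, hrem⟩ :
      ∃ i j : ℕ, i ≠ j ∧
        (Polynomial.X ^ i %ₘ m : Polynomial (ZMod p)) = Polynomial.X ^ j %ₘ m := by
    obtain ⟨i, j, hij, h⟩ := Finite.exists_ne_map_eq_of_infinite
      (fun n : ℕ => fun k : Fin m.natDegree =>
        ((Polynomial.X : Polynomial (ZMod p)) ^ n %ₘ m).coeff k)
    refine ⟨i, j, hij, ?_⟩
    ext n
    rcases lt_or_ge n m.natDegree with h' | h'
    · exact congrFun h ⟨n, h'⟩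
    · have hdeg : ∀ k : ℕ,
          ((Polynomial.X : Polynomial (ZMod p)) ^ k %ₘ m).coeff n = 0 := by
        intro k
        apply Polynomial.coeff_eq_zero_of_degree_lt
        calc (Polynomial.X ^ k %ₘ m).degree < m.degree :=
              Polynomial.degree_modByMonic_lt _ hm
          _ ≤ (n : WithBot ℕ) := by
              rw [Polynomial.degree_eq_natDegree hm.ne_zero]
              exact_mod_cast h'
      rw [hdeg i, hdeg j]
  -- wlog i < j
  wlog hlt : i < j generalizing i j
  · exact this j i hij.symm hrem.symm (hij.lt_or_gt.resolve_left hlt)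
  have hdvd : m ∣ Polynomial.X ^ j - Polynomial.X ^ i := by
    refine ⟨(Polynomial.X ^ j /ₘ m) - (Polynomial.X ^ i /ₘ m), ?_⟩
    have h1 := Polynomial.modByMonic_add_div ((Polynomial.X : Polynomial (ZMod p)) ^ i) m
    have h2 := Polynomial.modByMonic_add_div ((Polynomial.X : Polynomial (ZMod p)) ^ j) m
    rw [mul_sub]
    linear_combination h1 - h2 - hrem
  refine ⟨i, j - i, Nat.sub_pos_of_lt hlt, ?_⟩
  have heq : Polynomial.X ^ i * (Polynomial.X ^ (j - i) - 1)
      = (Polynomial.X : Polynomial (ZMod p)) ^ j - Polynomial.X ^ i := by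
    rw [mul_sub, mul_one, ← pow_add, Nat.add_sub_cancel' hlt.le]
  rw [heq]
  exact hfm.trans hdvd

lemma fpPolyPS_eq_psi (p : ℕ) (R : Type*) [CommRing R] [CharP R p] (g : Polynomial (ZMod p)) :
    fpPolyPS p R g =
      (Polynomial.coeToPowerSeries.ringHom.comp
        (Polynomial.mapRingHom (ZMod.castHom (dvd_refl p) R))) g := by
  ext n
  simp [fpPolyPS, Polynomial.coeToPowerSeries.ringHom_apply, Polynomial.coeff_coe,
    Polynomial.coeff_map]

/-- Let `R` be an integral domain of positive characteristic `p` with a non-Archimedean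
absolute value. For `f ∈ 𝔽_p[t] ⊆ A_R` the following are equivalent: (i) `f ≠ 0`;
(ii) there are `a, b, c ∈ A_R` with `(ta + 1)((t-1)b + 1) = f·c`. -/
theorem nonzero_iff_nu {R : Type*} [NormedCommRing R] [IsDomain R]
    (p : ℕ) (hp : p.Prime) [CharP R p]
    (hna : IsNonarchimedean (norm : R → ℝ))
    (hmul : ∀ x y : R, ‖x * y‖ = ‖x‖ * ‖y‖)
    (f : Polynomial (ZMod p)) :
    f ≠ 0 ↔
      ∃ a b c : PowerSeries R, EntireOK a ∧ EntireOK b ∧ EntireOK c ∧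
        (PowerSeries.X * a + 1) * ((PowerSeries.X - 1) * b + 1) = fpPolyPS p R f * c := by
  set ψ : Polynomial (ZMod p) →+* PowerSeries R :=
    Polynomial.coeToPowerSeries.ringHom.comp
      (Polynomial.mapRingHom (ZMod.castHom (dvd_refl p) R)) with hψ
  have hψX : ψ Polynomial.X = PowerSeries.X := by
    simp [hψ, Polynomial.coeToPowerSeries.ringHom_apply]
  have hψent : ∀ g : Polynomial (ZMod p), EntireOK (ψ g) := fun g => entireOK_poly _
  constructor
  · -- forward direction
    intro hf
    obtain ⟨i, d, hd, hdvd⟩ := dvd_X_pow_mul_X_pow_sub_one hp f hf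
    obtain ⟨e, rfl⟩ : ∃ e, d = e + 1 := ⟨d - 1, (Nat.succ_pred_eq_of_pos hd).symm⟩
    obtain ⟨c₀, hc₀⟩ : f ∣ (Polynomial.X ^ i * (Polynomial.X ^ (e + 1) - 1)) ^ 2 :=
      dvd_pow hdvd two_ne_zero
    set a₀ : Polynomial (ZMod p) := Polynomial.X ^ (2 * e + 1) - 2 * Polynomial.X ^ e with ha₀
    set b₀ : Polynomial (ZMod p) := ∑ l ∈ Finset.range (2 * i), Polynomial.X ^ l with hb₀
    have key : (Polynomial.X * a₀ + 1) * ((Polynomial.X - 1) * b₀ + 1) = f * c₀ := by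
      have h1 : (Polynomial.X : Polynomial (ZMod p)) * a₀ + 1
          = (Polynomial.X ^ (e + 1) - 1) ^ 2 := by rw [ha₀]; ring
      have h2 : ((Polynomial.X : Polynomial (ZMod p)) - 1) * b₀ + 1
          = Polynomial.X ^ (2 * i) := by
        rw [hb₀, mul_comm, geom_sum_mul, sub_add_cancel]
      rw [h1, h2, ← hc₀]; ring
    refine ⟨ψ a₀, ψ b₀, ψ c₀, hψent _, hψent _, hψent _, ?_⟩
    have := congrArg ψ key
    simp only [map_mul, map_add, map_sub, map_one, hψX] at this
    rw [this, fpPolyPS_eq_psi]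
  · -- reverse direction
    rintro ⟨a, b, c, -, hb, -, heq⟩
    intro hf0
    subst hf0
    have hzero : fpPolyPS p R (0 : Polynomial (ZMod p)) = 0 := by
      ext n; simp [fpPolyPS]
    rw [hzero, zero_mul, mul_eq_zero] at heq
    rcases heq with h | h
    · have := congrArg (PowerSeries.constantCoeff (R := R)) h
      simp at this
    · -- b must be ∑ Xⁿ, which is not entire
      have hb' : (1 - PowerSeries.X) * b = 1 := by linear_combination -h
      have hcoeff : ∀ n : ℕ, PowerSeries.coeff n b = 1 := by
        intro n
        induction n with
        | zero =>
          have := congrArg (PowerSeries.constantCoeff (R := R)) hb'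
          simpa using this
        | succ k ih =>
          have := congrArg (PowerSeries.coeff (R := R) (k + 1)) hb'
          rw [sub_mul, one_mul, map_sub, PowerSeries.coeff_succ_X_mul, ih,
            PowerSeries.coeff_one, if_neg (Nat.succ_ne_zero k)] at this
          exact sub_eq_zero.mp this
      have h1 : ‖(1 : R)‖ = 1 := by
        have hne : ‖(1 : R)‖ ≠ 0 := by
          simpa using (norm_ne_zero_iff (a := (1 : R))).mpr one_ne_zero
        have := hmul 1 1
        rw [mul_one] at this
        exact (mul_left_cancel₀ hne (by rw [mul_one, ← this])).symm
      have h2 := hb 2 (by norm_num)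
      simp only [hcoeff, h1, one_mul] at h2
      exact not_tendsto_nhds_of_tendsto_atTop
        (tendsto_pow_atTop_atTop_of_one_lt (by norm_num : (1:ℝ) < 2)) 0 h2
end
end

section
/- Let k be an algebraically closed field of characteristic p ≥ 17 and let f, g ∈ k[t] with f or g non-constant. Suppose there exist squares u_1, …, u_{17} ∈ k[t] with u_{n+2} - 2u_{n+1} + u_n = 2 for 1 ≤ n ≤ 15, fg = u_1, f + g = u_2 - u_1 - 1, and g divides f in k[t]. Then there exists r ≥ 0 such that f = g^{p^r}. -/
open Polynomial

section Buchi
variable {k : Type*} [Field k] [IsAlgClosed k] {p : ℕ}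

omit [IsAlgClosed k] in
private lemma cast_inj_of_lt' [CharP k p] {a b : ℕ} (ha : a < p) (hb : b < p)
    (h : (a : k) = (b : k)) : a = b := by
  rcases le_total a b with hle | hle
  · have h0 : ((b - a : ℕ) : k) = 0 := by push_cast [Nat.cast_sub hle]; rw [h]; ring
    have := Nat.eq_zero_of_dvd_of_lt ((CharP.cast_eq_zero_iff k p _).1 h0)
    omega
  · have h0 : ((a - b : ℕ) : k) = 0 := by push_cast [Nat.cast_sub hle]; rw [h]; ring
    have := Nat.eq_zero_of_dvd_of_lt ((CharP.cast_eq_zero_iff k p _).1 h0)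
    omega

omit [IsAlgClosed k] in
private lemma cast17_ne' [CharP k p] (hp17 : 17 ≤ p) {a b : ℕ} (ha : a < 17) (hb : b < 17)
    (hne : a ≠ b) : (a : k) ≠ (b : k) :=
  fun h => hne (cast_inj_of_lt' (p := p) (by omega) (by omega) h)

omit [IsAlgClosed k] in
private lemma sq_descend' (hp : p.Prime) (hodd : p ≠ 2) {a b w : Polynomial k} (ha : a ≠ 0)
    (h : a ^ p * b = w ^ 2) : ∃ v : Polynomial k, a * b = v ^ 2 := by
  have hmod : p % 2 = 1 := Nat.odd_iff.1 (hp.odd_of_ne_two hodd)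
  have h2le := hp.two_le
  have h2 : (a ^ ((p - 1) / 2)) ^ 2 ∣ w ^ 2 := by
    have he : (a ^ ((p - 1) / 2)) ^ 2 = a ^ (p - 1) := by
      rw [← pow_mul]; congr 1; omega
    rw [he, ← h]
    exact Dvd.dvd.mul_right (pow_dvd_pow a (by omega)) b
  have h3 : a ^ ((p - 1) / 2) ∣ w :=
    (IsIntegrallyClosed.pow_dvd_pow_iff (two_ne_zero)).1 h2
  obtain ⟨v, hv⟩ := h3
  refine ⟨v, ?_⟩
  have hpow : a ^ (p - 1) ≠ 0 := pow_ne_zero _ ha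
  have key : a ^ (p - 1) * (a * b) = a ^ (p - 1) * v ^ 2 := by
    have hp1 : a ^ (p-1) * a = a ^ p := by rw [← pow_succ]; congr 1; omega
    calc a ^ (p - 1) * (a * b) = a ^ p * b := by rw [← mul_assoc, hp1]
    _ = (a ^ ((p-1)/2) * v) ^ 2 := by rw [h, hv]
    _ = a ^ (p - 1) * v ^ 2 := by rw [mul_pow, ← pow_mul]; congr 2; omega
  exact mul_left_cancel₀ hpow key

private lemma exists_pth_root' [CharP k p] (hp : p ≠ 0) {f : Polynomial k}
    (hf : derivative f = 0) : ∃ f₁ : Polynomial k, f₁ ^ p = f := by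
  haveI : NeZero p := ⟨hp⟩
  haveI : ExpChar k p := by
    rcases CharP.char_is_prime_or_zero k p with h | h
    · exact ExpChar.prime h
    · exact absurd h hp
  set f₀ : Polynomial k := f.map ((frobeniusEquiv k p).symm : k →+* k) with hf₀
  have hder : derivative f₀ = 0 := by
    rw [hf₀, derivative_map, hf, Polynomial.map_zero]
  refine ⟨contract p f₀, ?_⟩
  have h1 : expand k p (contract p f₀) = f₀ := expand_contract p hder hp
  have h2 : map (frobenius k p) (expand k p (contract p f₀)) = (contract p f₀) ^ p :=
    map_frobenius_expand p _
  rw [h1, hf₀, map_map] at h2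
  have h3 : (frobenius k p).comp ((frobeniusEquiv k p).symm : k →+* k) = RingHom.id k := by
    ext x; simp [frobenius_apply_frobeniusEquiv_symm]
  rw [h3, map_id] at h2
  exact h2.symm

private lemma const_case' [CharP k p] (hp17 : 17 ≤ p) {f g : Polynomial k}
    (hf : 0 < f.natDegree) (hg : g.natDegree = 0)
    (hs : ∀ c : ℕ, c < 17 → ∃ w : Polynomial k,
      (f + (c : Polynomial k)) * (g + (c : Polynomial k)) = w ^ 2) : False := by
  obtain ⟨a, rfl⟩ : ∃ a, g = C a := ⟨g.coeff 0, eq_C_of_natDegree_eq_zero hg⟩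
  obtain ⟨c₁, c₂, hc₁, hc₂, hne, ha₁, ha₂⟩ :
      ∃ c₁ c₂ : ℕ, c₁ < 3 ∧ c₂ < 3 ∧ c₁ ≠ c₂ ∧ a + (c₁ : k) ≠ 0 ∧ a + (c₂ : k) ≠ 0 := by
    by_cases h0 : a + (0 : ℕ) = 0
    · refine ⟨1, 2, by norm_num, by norm_num, by norm_num, ?_, ?_⟩
      · intro h
        exact cast17_ne' (k := k) hp17 (by norm_num) (by norm_num)
          (by norm_num : (0:ℕ) ≠ 1) (by push_cast at h0 h ⊢; linear_combination h0 - h)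
      · intro h
        exact cast17_ne' (k := k) hp17 (by norm_num) (by norm_num)
          (by norm_num : (0:ℕ) ≠ 2) (by push_cast at h0 h ⊢; linear_combination h0 - h)
    · by_cases h1 : a + (1 : ℕ) = 0
      · refine ⟨0, 2, by norm_num, by norm_num, by norm_num, h0, ?_⟩
        intro h
        exact cast17_ne' (k := k) hp17 (by norm_num) (by norm_num)
          (by norm_num : (1:ℕ) ≠ 2) (by push_cast at h1 h ⊢; linear_combination h1 - h)
      · exact ⟨0, 1, by norm_num, by norm_num, by norm_num, h0, h1⟩
  have sq : ∀ c : ℕ, c < 3 → a + (c : k) ≠ 0 → ∃ s : Polynomial k,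
      f + (c : Polynomial k) = s ^ 2 := by
    intro c hc hac
    obtain ⟨w, hw⟩ := hs c (by omega)
    obtain ⟨e, he⟩ := IsAlgClosed.exists_pow_nat_eq (k := k) (a + (c:k))⁻¹ (n := 2) (by norm_num)
    refine ⟨w * C e, ?_⟩
    have hCc : (c : Polynomial k) = C ((c : k)) := by simp
    have hgc : C a + (c : Polynomial k) = C (a + (c:k)) := by rw [hCc, map_add]
    rw [hgc] at hw
    have : (f + (c : Polynomial k)) * C (a + (c:k)) * C ((a + (c:k))⁻¹)
        = w ^ 2 * C ((a + (c:k))⁻¹) := by rw [hw]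
    rw [mul_assoc, ← map_mul, mul_inv_cancel₀ hac, map_one, mul_one] at this
    rw [this, mul_pow, ← map_pow, he]
  obtain ⟨s₁, hs₁⟩ := sq c₁ hc₁ ha₁
  obtain ⟨s₂, hs₂⟩ := sq c₂ hc₂ ha₂
  have hδ : ((c₂ : k) - (c₁ : k)) ≠ 0 := by
    intro h
    exact cast17_ne' (k := k) hp17 (by omega) (by omega) (Ne.symm hne)
      (by linear_combination h)
  have hprod : (s₂ - s₁) * (s₂ + s₁) = C ((c₂ : k) - (c₁ : k)) := by
    have hCc₁ : (c₁ : Polynomial k) = C ((c₁ : k)) := by simp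
    have hCc₂ : (c₂ : Polynomial k) = C ((c₂ : k)) := by simp
    rw [map_sub, ← hCc₁, ← hCc₂]
    linear_combination hs₁ - hs₂
  have hCδ : (C ((c₂ : k) - (c₁ : k)) : Polynomial k) ≠ 0 := by
    rw [Ne, C_eq_zero]; exact hδ
  have hne1 : s₂ - s₁ ≠ 0 := by rintro h; rw [h, zero_mul] at hprod; exact hCδ hprod.symm
  have hne2 : s₂ + s₁ ≠ 0 := by rintro h; rw [h, mul_zero] at hprod; exact hCδ hprod.symm
  have hdeg : (s₂ - s₁).natDegree + (s₂ + s₁).natDegree = 0 := by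
    rw [← natDegree_mul hne1 hne2, hprod, natDegree_C]
  have hd1 : (s₂ - s₁).natDegree = 0 := by omega
  have hd2 : (s₂ + s₁).natDegree = 0 := by omega
  obtain ⟨β, hβ⟩ : ∃ β, s₂ - s₁ = C β := ⟨_, eq_C_of_natDegree_eq_zero hd1⟩
  obtain ⟨γ, hγ⟩ : ∃ γ, s₂ + s₁ = C γ := ⟨_, eq_C_of_natDegree_eq_zero hd2⟩
  have h2k : (2 : k) ≠ 0 := by
    intro h
    exact cast17_ne' (k := k) hp17 (by omega) (by omega) (by norm_num : (2:ℕ) ≠ 0)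
      (by push_cast; linear_combination h)
  have hs₂C : s₂ = C (2⁻¹ * (β + γ)) := by
    have h2 : (2 : Polynomial k) * s₂ = C (β + γ) := by
      rw [map_add, ← hβ, ← hγ]; ring
    have : C ((2:k)⁻¹) * ((2 : Polynomial k) * s₂) = C ((2:k)⁻¹) * C (β + γ) := by rw [h2]
    rw [← map_mul] at this
    rw [← this]
    have h2C : (2 : Polynomial k) = C (2 : k) := by
      rw [show (2:k) = ((2:ℕ):k) by norm_num, C_eq_natCast]; norm_num
    rw [h2C, ← mul_assoc, ← map_mul, inv_mul_cancel₀ h2k, map_one, one_mul]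
  have : f = C ((2⁻¹ * (β + γ))^2 - (c₂:k)) := by
    rw [map_sub, map_pow, ← hs₂C]
    have hCc₂ : (c₂ : Polynomial k) = C ((c₂ : k)) := by simp
    rw [← hCc₂]
    linear_combination hs₂
  rw [this, natDegree_C] at hf
  exact lt_irrefl 0 hf

omit [IsAlgClosed k] in
private lemma pow_sub_one_dvd_derivative' (P : Polynomial k) (α : k) :
    (X - C α) ^ (rootMultiplicity α P - 1) ∣ derivative P := by
  obtain ⟨q, hq⟩ := pow_rootMultiplicity_dvd P α
  cases hm : rootMultiplicity α P with
  | zero => simp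
  | succ n =>
    rw [hm] at hq
    refine ⟨((n : Polynomial k) + 1) * q + (X - C α) * derivative q, ?_⟩
    rw [hq, derivative_mul, derivative_pow]
    simp only [derivative_sub, derivative_X, derivative_C, sub_zero, mul_one,
      Nat.add_sub_cancel]
    push_cast
    simp only [map_add, C_1, C_eq_natCast]
    ring

private lemma derivative_vanishes' [CharP k p] (hp17 : 17 ≤ p) {f g : Polynomial k}
    (hF : 0 < f.natDegree) (hGF : g.natDegree ≤ f.natDegree) (hne : f ≠ g)
    (hs : ∀ c : ℕ, c < 17 → ∃ w : Polynomial k,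
      (f + (c : Polynomial k)) * (g + (c : Polynomial k)) = w ^ 2) :
    derivative f = 0 := by
  classical
  by_contra hf'
  set F := f.natDegree with hFdef
  set P : ℕ → Polynomial k := fun c => f + (c : Polynomial k) with hP
  set Q : ℕ → Polynomial k := fun c => g + (c : Polynomial k) with hQ
  have hPdeg : ∀ c : ℕ, (P c).natDegree = F := by
    intro c
    rw [hP]
    simp only [← C_eq_natCast, natDegree_add_C]
    exact hFdef.symm
  have hPne : ∀ c : ℕ, P c ≠ 0 := by
    intro c h
    have := hPdeg c
    rw [h] at this
    simp only [natDegree_zero] at this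
    omega
  have hderP : ∀ c : ℕ, derivative (P c) = derivative f := by
    intro c; rw [hP]; simp [derivative_natCast]
  set D : ℕ → Finset k := fun c => (P c).roots.toFinset with hD
  have hcard : ∀ c : ℕ, Multiset.card (P c).roots = F := by
    intro c
    rw [← hPdeg c]
    exact (splits_iff_card_roots.1 (IsAlgClosed.splits _))
  have hdisj : ∀ c₁ c₂ : ℕ, c₁ < 17 → c₂ < 17 → c₁ ≠ c₂ →
      ∀ α : k, α ∈ D c₁ → α ∈ D c₂ → False := by
    intro c₁ c₂ h1 h2 hcc α hα1 hα2
    have e1 : f.eval α + (c₁ : k) = 0 := by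
      have := (mem_roots (hPne c₁)).1 (Multiset.mem_toFinset.1 hα1)
      simpa [hP, IsRoot] using this
    have e2 : f.eval α + (c₂ : k) = 0 := by
      have := (mem_roots (hPne c₂)).1 (Multiset.mem_toFinset.1 hα2)
      simpa [hP, IsRoot] using this
    exact cast17_ne' (k := k) hp17 h1 h2 hcc (by linear_combination e1 - e2)
  set H : ℕ → Polynomial k := fun c =>
    ∏ α ∈ D c, (X - C α) ^ (rootMultiplicity α (P c) - 1) with hH
  have hHne : ∀ c : ℕ, H c ≠ 0 := by
    intro c
    rw [hH]
    refine Finset.prod_ne_zero_iff.2 fun α _ => pow_ne_zero _ (X_sub_C_ne_zero α)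
  have hHdvd : ∀ c : ℕ, H c ∣ derivative f := by
    intro c
    rw [← hderP c, hH]
    refine Finset.prod_dvd_of_coprime (fun α hα β hβ hab => ?_) fun α _ =>
      pow_sub_one_dvd_derivative' (P c) α
    exact (isCoprime_X_sub_C_of_isUnit_sub ((sub_ne_zero.2 hab).isUnit)).pow
  have hHdeg : ∀ c : ℕ, (H c).natDegree + (D c).card = F := by
    intro c
    have h1 : (H c).natDegree = ∑ α ∈ D c, (rootMultiplicity α (P c) - 1) := by
      rw [hH, natDegree_prod _ _ (fun α _ => pow_ne_zero _ (X_sub_C_ne_zero α))]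
      refine Finset.sum_congr rfl fun α _ => ?_
      rw [natDegree_pow, natDegree_X_sub_C, mul_one]
    have h2 : ∑ α ∈ D c, rootMultiplicity α (P c) = F := by
      rw [← hcard c]
      rw [← Multiset.toFinset_sum_count_eq]
      exact Finset.sum_congr rfl fun α _ => by rw [count_roots]
    have h3 : ∀ α ∈ D c, 1 ≤ rootMultiplicity α (P c) := by
      intro α hα
      exact (rootMultiplicity_pos (hPne c)).2 ((mem_roots (hPne c)).1
        (Multiset.mem_toFinset.1 hα))
    rw [h1, ← h2, ← Finset.sum_attach (D c) (fun α => rootMultiplicity α (P c))]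
    rw [← Finset.sum_attach (D c) (fun α => rootMultiplicity α (P c) - 1)]
    rw [Finset.card_eq_sum_ones, ← Finset.sum_attach (D c) (fun _ => 1),
      ← Finset.sum_add_distrib]
    refine Finset.sum_congr rfl fun α _ => ?_
    have := h3 α.1 α.2
    omega
  have hprod : (∏ c ∈ Finset.range 17, H c) ∣ derivative f := by
    refine Finset.prod_dvd_of_coprime (fun c₁ hc₁ c₂ hc₂ hcc => ?_) fun c _ => hHdvd c
    simp only [Finset.coe_range, Set.mem_Iio] at hc₁ hc₂
    rw [hH]
    refine IsCoprime.prod_left fun α hα => IsCoprime.prod_right fun β hβ => ?_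
    have hab : α ≠ β := by
      rintro rfl
      exact hdisj c₁ c₂ hc₁ hc₂ hcc α hα hβ
    exact (isCoprime_X_sub_C_of_isUnit_sub ((sub_ne_zero.2 hab).isUnit)).pow
  have hsum_le : ∑ c ∈ Finset.range 17, (H c).natDegree ≤ (derivative f).natDegree := by
    rw [← natDegree_prod _ _ (fun c _ => hHne c)]
    exact natDegree_le_of_dvd hprod hf'
  have hder_lt : (derivative f).natDegree < F := natDegree_derivative_lt (by omega)
  set U : Finset k := (Finset.range 17).biUnion D with hU
  have hUcard : U.card = ∑ c ∈ Finset.range 17, (D c).card := by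
    rw [hU]
    refine Finset.card_biUnion fun c₁ hc₁ c₂ hc₂ hcc => ?_
    simp only [Finset.coe_range, Set.mem_Iio, Function.onFun] at hc₁ hc₂ ⊢
    rw [Finset.disjoint_left]
    intro α h1 h2
    exact hdisj c₁ c₂ hc₁ hc₂ hcc α h1 h2
  have hUbig : 16 * F + 1 ≤ U.card := by
    have h17 : ∑ c ∈ Finset.range 17, ((H c).natDegree + (D c).card) = 17 * F := by
      rw [Finset.sum_congr rfl fun c _ => hHdeg c]
      simp [Finset.sum_const, mul_comm]
    rw [Finset.sum_add_distrib] at h17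
    omega
  set Z : Finset k := (derivative f).roots.toFinset with hZ
  have hZcard : Z.card ≤ (derivative f).natDegree :=
    le_trans (Multiset.toFinset_card_le _) (card_roots' _)
  have hgood : ∀ α ∈ U \ Z, (f - g).eval α = 0 := by
    intro α hα
    rw [Finset.mem_sdiff] at hα
    obtain ⟨hαU, hαZ⟩ := hα
    rw [hU, Finset.mem_biUnion] at hαU
    obtain ⟨c, hc, hαc⟩ := hαU
    rw [Finset.mem_range] at hc
    obtain ⟨w, hw⟩ := hs c hc
    have hPα : (P c).eval α = 0 :=
      (mem_roots (hPne c)).1 (Multiset.mem_toFinset.1 hαc)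
    have hwα : w.eval α = 0 := by
      have := congrArg (eval α) hw
      simp only [eval_mul, eval_pow] at this
      rw [hPα, zero_mul] at this
      exact pow_eq_zero_iff (n := 2) (by norm_num) |>.1 this.symm
    have hfα : (derivative f).eval α ≠ 0 := by
      intro h0
      apply hαZ
      rw [hZ, Multiset.mem_toFinset, mem_roots hf']
      exact h0
    have hder : derivative f * Q c + P c * derivative g = C 2 * w ^ 1 * derivative w := by
      have := congrArg derivative hw
      rw [derivative_mul, derivative_pow] at this
      rw [hderP c] at this
      have hQder : derivative (Q c) = derivative g := by
        rw [hQ]; simp [derivative_natCast]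
      rw [hQder] at this
      simpa using this
    have := congrArg (eval α) hder
    simp only [eval_mul, eval_add, eval_pow, pow_one] at this
    rw [hPα, hwα, zero_mul, add_zero, mul_zero, zero_mul] at this
    have hQα : (Q c).eval α = 0 := by
      rcases mul_eq_zero.1 this with h | h
      · exact absurd h hfα
      · exact h
    have hfcα : f.eval α + (c : k) = 0 := by simpa [hP] using hPα
    have hgcα : g.eval α + (c : k) = 0 := by simpa [hQ] using hQα
    rw [eval_sub]
    linear_combination hfcα - hgcα
  have hfg : f - g ≠ 0 := sub_ne_zero.2 hne
  have hgood_card : (U \ Z).card ≤ F := by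
    have hsub : U \ Z ⊆ (f - g).roots.toFinset := by
      intro α hα
      rw [Multiset.mem_toFinset, mem_roots hfg]
      exact hgood α hα
    calc (U \ Z).card ≤ (f - g).roots.toFinset.card := Finset.card_le_card hsub
      _ ≤ Multiset.card (f - g).roots := Multiset.toFinset_card_le _
      _ ≤ (f - g).natDegree := card_roots' _
      _ ≤ max f.natDegree g.natDegree := natDegree_sub_le f g
      _ = F := by rw [max_eq_left hGF]
  have hfinal : U.card ≤ (U \ Z).card + Z.card := Finset.card_le_card_sdiff_add_card
  omega

private lemma buchi_sym [CharP k p] (hp : p.Prime) (hp17 : 17 ≤ p) :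
    ∀ N : ℕ, ∀ f g : Polynomial k, f.natDegree + g.natDegree ≤ N →
    (∀ c : ℕ, c < 17 → ∃ w : Polynomial k,
      (f + (c : Polynomial k)) * (g + (c : Polynomial k)) = w ^ 2) →
    (0 < f.natDegree ∨ 0 < g.natDegree) →
    ∃ r : ℕ, f = g ^ p ^ r ∨ g = f ^ p ^ r := by
  haveI : Fact p.Prime := ⟨hp⟩
  have hp0 : p ≠ 0 := hp.ne_zero
  have hp2 : p ≠ 2 := by omega
  intro N
  induction N with
  | zero =>
    intro f g hdeg hs hnc
    omega
  | succ N ih =>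
    intro f g hdeg hs hnc
    have hs' : ∀ c : ℕ, c < 17 → ∃ w : Polynomial k,
        (g + (c : Polynomial k)) * (f + (c : Polynomial k)) = w ^ 2 := by
      intro c hc
      obtain ⟨w, hw⟩ := hs c hc
      exact ⟨w, by rw [← hw]; ring⟩
    have hfpos : 0 < f.natDegree := by
      by_contra h
      have hf0 : f.natDegree = 0 := by omega
      have hgpos : 0 < g.natDegree := by rcases hnc with h' | h' <;> omega
      exact const_case' hp17 hgpos hf0 hs'
    have hgpos : 0 < g.natDegree := by
      by_contra h
      have hg0 : g.natDegree = 0 := by omega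
      exact const_case' hp17 hfpos hg0 hs
    by_cases heq : f = g
    · exact ⟨0, Or.inl (by rw [heq, pow_zero, pow_one])⟩
    have hcastpow : ∀ c : ℕ, ((c : Polynomial k)) ^ p = (c : Polynomial k) := by
      intro c
      rw [← C_eq_natCast, ← map_pow]
      congr 1
      have := map_natCast (frobenius k p) c
      rwa [frobenius_def] at this
    rcases le_or_gt g.natDegree f.natDegree with hle | hlt
    · -- f has the larger degree; its derivative vanishes
      have hder : derivative f = 0 := derivative_vanishes' hp17 hfpos hle heq hs
      obtain ⟨f₁, hf₁⟩ := exists_pth_root' hp0 hder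
      have hf₁deg : f.natDegree = p * f₁.natDegree := by
        rw [← hf₁, natDegree_pow]
      have hf₁pos : 0 < f₁.natDegree := by
        rcases Nat.eq_zero_or_pos f₁.natDegree with h | h
        · rw [h, mul_zero] at hf₁deg; omega
        · exact h
      have hf₁lt : f₁.natDegree < f.natDegree := by
        have : 2 * f₁.natDegree ≤ p * f₁.natDegree :=
          Nat.mul_le_mul_right _ (by omega)
        omega
      have hs₁ : ∀ c : ℕ, c < 17 → ∃ v : Polynomial k,
          (f₁ + (c : Polynomial k)) * (g + (c : Polynomial k)) = v ^ 2 := by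
        intro c hc
        obtain ⟨w, hw⟩ := hs c hc
        have hfp : (f₁ + (c : Polynomial k)) ^ p = f + (c : Polynomial k) := by
          rw [add_pow_char, hf₁, hcastpow]
        have hane : f₁ + (c : Polynomial k) ≠ 0 := by
          intro h
          rw [h, zero_pow hp0] at hfp
          have : (f + (c : Polynomial k)).natDegree = f.natDegree := by
            simp only [← C_eq_natCast, natDegree_add_C]
          rw [← hfp] at this
          simp only [natDegree_zero] at this
          omega
        exact sq_descend' hp hp2 hane (by rw [hfp]; exact hw)
      obtain ⟨r, hr⟩ := ih f₁ g (by omega) hs₁ (Or.inl hf₁pos)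
      rcases hr with h | h
      · refine ⟨r + 1, Or.inl ?_⟩
        rw [← hf₁, h, ← pow_mul, pow_succ]
      · rcases r with _ | s
        · have hgf₁ : g = f₁ := by simpa using h
          exact ⟨1, Or.inl (by rw [pow_one, ← hf₁, hgf₁])⟩
        · refine ⟨s, Or.inr ?_⟩
          rw [← hf₁, ← pow_mul, ← pow_succ']
          exact h
    · -- g has the larger degree
      have hder : derivative g = 0 :=
        derivative_vanishes' hp17 hgpos (le_of_lt hlt) (Ne.symm heq) hs'
      obtain ⟨g₁, hg₁⟩ := exists_pth_root' hp0 hder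
      have hg₁deg : g.natDegree = p * g₁.natDegree := by
        rw [← hg₁, natDegree_pow]
      have hg₁pos : 0 < g₁.natDegree := by
        rcases Nat.eq_zero_or_pos g₁.natDegree with h | h
        · rw [h, mul_zero] at hg₁deg; omega
        · exact h
      have hg₁lt : g₁.natDegree < g.natDegree := by
        have : 2 * g₁.natDegree ≤ p * g₁.natDegree :=
          Nat.mul_le_mul_right _ (by omega)
        omega
      have hs₁ : ∀ c : ℕ, c < 17 → ∃ v : Polynomial k,
          (f + (c : Polynomial k)) * (g₁ + (c : Polynomial k)) = v ^ 2 := by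
        intro c hc
        obtain ⟨w, hw⟩ := hs' c hc
        have hgp : (g₁ + (c : Polynomial k)) ^ p = g + (c : Polynomial k) := by
          rw [add_pow_char, hg₁, hcastpow]
        have hane : g₁ + (c : Polynomial k) ≠ 0 := by
          intro h
          rw [h, zero_pow hp0] at hgp
          have : (g + (c : Polynomial k)).natDegree = g.natDegree := by
            simp only [← C_eq_natCast, natDegree_add_C]
          rw [← hgp] at this
          simp only [natDegree_zero] at this
          omega
        obtain ⟨v, hv⟩ := sq_descend' hp hp2 hane (by rw [hgp]; exact hw)
        exact ⟨v, by rw [← hv]; ring⟩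
      obtain ⟨r, hr⟩ := ih f g₁ (by omega) hs₁ (Or.inl hfpos)
      rcases hr with h | h
      · rcases r with _ | s
        · have : f = g₁ := by simpa using h
          exact ⟨1, Or.inr (by rw [pow_one, ← hg₁, this])⟩
        · refine ⟨s, Or.inl ?_⟩
          rw [← hg₁, ← pow_mul, ← pow_succ']
          exact h
      · refine ⟨r + 1, Or.inr ?_⟩
        rw [← hg₁, h, ← pow_mul, pow_succ]

end Buchi

/-- Let `k` be an algebraically closed field of characteristic `p ≥ 17` and
`f, g ∈ k[t]` with `f` or `g` non-constant. If there are squares `u_1, …, u_17 ∈ k[t]`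
with `u_{n+2} - 2u_{n+1} + u_n = 2` for `1 ≤ n ≤ 15`, `fg = u_1`,
`f + g = u_2 - u_1 - 1`, and `g ∣ f` in `k[t]`, then `f = g^{p^r}` for some `r ≥ 0`. -/
theorem buchi_application (k : Type*) [Field k] [IsAlgClosed k]
    (p : ℕ) (hp : p.Prime) (hp17 : 17 ≤ p) [CharP k p]
    (f g : Polynomial k) (hnc : 0 < f.natDegree ∨ 0 < g.natDegree)
    (u : ℕ → Polynomial k)
    (hsq : ∀ n : ℕ, 1 ≤ n → n ≤ 17 → ∃ w : Polynomial k, u n = w ^ 2)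
    (hrec : ∀ n : ℕ, 1 ≤ n → n ≤ 15 → u (n + 2) - 2 * u (n + 1) + u n = 2)
    (hu1 : f * g = u 1) (hu2 : f + g = u 2 - u 1 - 1)
    (hdvd : g ∣ f) :
    ∃ r : ℕ, f = g ^ p ^ r := by
  have key : ∀ n : ℕ, n ≤ 16 →
      u (n + 1) = (f + (n : Polynomial k)) * (g + (n : Polynomial k)) := by
    intro n
    induction n using Nat.strong_induction_on with
    | _ n ih =>
      rcases n with _ | n
      · intro _
        rw [Nat.cast_zero, add_zero, add_zero]
        exact hu1.symm
      rcases n with _ | m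
      · intro _
        push_cast
        linear_combination -hu2 - hu1
      · intro hm
        have h0 := ih m (by omega) (by omega)
        have h1 := ih (m + 1) (by omega) (by omega)
        have hr := hrec (m + 1) (by omega) (by omega)
        push_cast at h0 h1 ⊢
        linear_combination hr + 2 * h1 - h0
  have hs17 : ∀ c : ℕ, c < 17 → ∃ w : Polynomial k,
      (f + (c : Polynomial k)) * (g + (c : Polynomial k)) = w ^ 2 := by
    intro c hc
    obtain ⟨w, hw⟩ := hsq (c + 1) (by omega) (by omega)
    exact ⟨w, (key c (by omega)).symm.trans hw⟩
  obtain ⟨r, hr⟩ := buchi_sym (k := k) hp hp17 (f.natDegree + g.natDegree) f g le_rfl hs17 hnc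
  rcases hr with h | h
  · exact ⟨r, h⟩
  · -- g = f ^ p ^ r together with g ∣ f forces r = 0
    have hf0 : f ≠ 0 := by
      intro h0
      rw [h0] at h
      rw [zero_pow (by positivity)] at h
      rw [h0, h] at hnc
      simp at hnc
    have hgle : g.natDegree ≤ f.natDegree := natDegree_le_of_dvd hdvd hf0
    have hgdeg : g.natDegree = p ^ r * f.natDegree := by rw [h, natDegree_pow]
    have hFpos : 0 < f.natDegree := by
      rcases Nat.eq_zero_or_pos f.natDegree with h0 | h0
      · rcases hnc with h' | h'
        · omega
        · rw [hgdeg, h0, mul_zero] at h'; omega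
      · exact h0
    have hpr : p ^ r ≤ 1 := by
      have : p ^ r * f.natDegree ≤ 1 * f.natDegree := by
        rw [one_mul]; omega
      exact Nat.le_of_mul_le_mul_right this hFpos
    rcases r with _ | s
    · refine ⟨0, ?_⟩
      rw [pow_zero, pow_one] at h ⊢
      rw [h]
    · exfalso
      have : p ≤ p ^ (s + 1) := Nat.le_self_pow (by omega) p
      omega
end
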